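/- arXiv:1504.01759 — 4 statements merged into one kernel-verified Lean document; each statement's English description precedes it below -/
import Mathlib

section
/- Under the stated assumptions, there is a constant C > 0 (one may take C = e) such that for every n ≥ 1 and every x > 0, the function ℱ_n(x) = ∫_0^x (1 − F_n(y)) dy satisfies ℱ_n(x) ≤ C · x · n · ψ(1 − e^{−1/x}). -/
open MeasureTheory Filter Topology

noncomputable section

/-- Coefficients `c(ψ,k)` of the Bernstein function `ψ` with drift `b` and Lévy measure `ν`:
`c(ψ,k) = (1/k!) ∫ s^k e^{-s} dν(s) + b·[k = 1]`. -/
def bernC (b : ℝ) (ν : Measure ℝ) (k : ℕ) : ℝ :=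
  ((k.factorial : ℝ))⁻¹ * ∫ s in Set.Ioi (0 : ℝ), s ^ k * Real.exp (-s) ∂ν
    + if k = 1 then b else 0

/-- One-step distribution of the discrete subordinator: mass `c k` at `k ≥ 1` and no mass at `0`. -/
def stepPMF (c : ℕ → ℝ) (k : ℕ) : ℝ := if k = 0 then 0 else c k

/-- `tauPMF c n k = P(τ_n = k)`, the `n`-fold convolution of the one-step distribution. -/
def tauPMF (c : ℕ → ℝ) : ℕ → ℕ → ℝ
  | 0, k => if k = 0 then 1 else 0
  | n + 1, k => ∑ j ∈ Finset.range (k + 1), tauPMF c n j * stepPMF c (k - j)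

/-- `cdfTau c n t = F_n(t) = P(τ_n ≤ t)`. -/
def cdfTau (c : ℕ → ℝ) (n : ℕ) (t : ℝ) : ℝ :=
  if t < 0 then 0 else ∑ k ∈ Finset.range (⌊t⌋₊ + 1), tauPMF c n k

section Helpers
open Set
open scoped ENNReal NNReal

lemma hasSum_exp_real (x : ℝ) : HasSum (fun n : ℕ => x ^ n / n.factorial) (Real.exp x) := by
  rw [Real.exp_eq_exp_ℝ]; exact NormedSpace.expSeries_div_hasSum_exp x

lemma pow_div_factorial_le_exp (x : ℝ) (hx : 0 ≤ x) (k : ℕ) :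
    x ^ k / k.factorial ≤ Real.exp x := by
  calc x ^ k / k.factorial ≤ ∑ i ∈ Finset.range (k + 1), x ^ i / i.factorial := by
        exact Finset.single_le_sum (f := fun i => x ^ i / (i.factorial : ℝ))
          (fun i _ => by positivity) (Finset.self_mem_range_succ k)
    _ ≤ Real.exp x := Real.sum_le_exp_of_nonneg hx _

lemma pow_mul_exp_neg_le (k : ℕ) (hk : 1 ≤ k) {s : ℝ} (hs : 0 < s) :
    s ^ k * Real.exp (-s) ≤ (k.factorial : ℝ) * min 1 s := by
  rcases le_or_gt s 1 with h | h
  · have h1 : s ^ k ≤ s := pow_le_of_le_one hs.le h (by omega)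
    have : s ^ k * Real.exp (-s) ≤ s := by
      calc s ^ k * Real.exp (-s) ≤ s ^ k * 1 := by
            exact mul_le_mul_of_nonneg_left (Real.exp_le_one_iff.mpr (by linarith)) (by positivity)
        _ = s ^ k := mul_one _
        _ ≤ s := h1
    have hmin : min 1 s = s := min_eq_right h
    nlinarith [(Nat.one_le_cast (α := ℝ)).mpr (Nat.factorial_pos k), Real.exp_pos (-s), mul_pos (pow_pos hs k) (Real.exp_pos (-s))]
  · have hmin : min 1 s = 1 := min_eq_left h.le
    rw [hmin, mul_one]
    have := pow_div_factorial_le_exp s hs.le k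
    have hfac : (0:ℝ) < k.factorial := by exact_mod_cast Nat.factorial_pos k
    rw [div_le_iff₀ hfac] at this
    calc s ^ k * Real.exp (-s) ≤ (Real.exp s * k.factorial) * Real.exp (-s) := by
          exact mul_le_mul_of_nonneg_right this (Real.exp_pos _).le
      _ = (k.factorial : ℝ) * (Real.exp s * Real.exp (-s)) := by ring
      _ = (k.factorial : ℝ) := by rw [← Real.exp_add]; simp

lemma one_sub_exp_le_min {a : ℝ} : 1 - Real.exp (-a) ≤ min 1 a := by
  have h1 : 1 - Real.exp (-a) ≤ 1 := by have := (Real.exp_pos (-a)).le; linarith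
  have h2 : 1 - Real.exp (-a) ≤ a := by have := Real.add_one_le_exp (-a); linarith
  exact le_min h1 h2

section Bern
variable {b : ℝ} {ν : Measure ℝ}

lemma integrableOn_pow_exp (hνfin : IntegrableOn (fun s => min 1 s) (Set.Ioi (0 : ℝ)) ν)
    {k : ℕ} (hk : 1 ≤ k) : IntegrableOn (fun s => s ^ k * Real.exp (-s)) (Set.Ioi (0 : ℝ)) ν := by
  apply Integrable.mono' (hνfin.const_mul (k.factorial : ℝ))
  · exact ((continuous_pow k).mul (Real.continuous_exp.comp continuous_neg)).aestronglyMeasurable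
  · refine (ae_restrict_iff' measurableSet_Ioi).mpr (Filter.Eventually.of_forall fun s hs => ?_)
    have hs' : (0:ℝ) < s := hs
    rw [Real.norm_eq_abs, abs_of_nonneg (by positivity)]
    exact pow_mul_exp_neg_le k hk hs'

lemma integrableOn_one_sub_exp (hνfin : IntegrableOn (fun s => min 1 s) (Set.Ioi (0 : ℝ)) ν)
    {u : ℝ} (hu0 : 0 ≤ u) (hu1 : u ≤ 1) :
    IntegrableOn (fun s => 1 - Real.exp (-(u * s))) (Set.Ioi (0 : ℝ)) ν := by
  apply Integrable.mono' hνfin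
  · exact (continuous_const.sub (Real.continuous_exp.comp (continuous_const.mul continuous_id).neg)).aestronglyMeasurable
  · refine (ae_restrict_iff' measurableSet_Ioi).mpr (Filter.Eventually.of_forall fun s hs => ?_)
    have hs' : (0:ℝ) < s := hs
    rw [Real.norm_eq_abs, abs_of_nonneg (by simp [Real.exp_le_one_iff]; positivity)]
    refine le_trans one_sub_exp_le_min (le_min (min_le_left _ _) ?_)
    calc min 1 (u*s) ≤ u * s := min_le_right _ _
      _ ≤ 1 * s := by nlinarith
      _ = s := one_mul s

lemma bernC_nonneg (hb : 0 ≤ b) (k : ℕ) : 0 ≤ bernC b ν k := by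
  unfold bernC
  have h1 : 0 ≤ ∫ s in Set.Ioi (0:ℝ), s ^ k * Real.exp (-s) ∂ν :=
    setIntegral_nonneg measurableSet_Ioi fun s hs => by
      have : (0:ℝ) < s := hs; positivity
  have h2 : (0:ℝ) ≤ ((k.factorial : ℝ))⁻¹ := by positivity
  positivity

lemma stepPMF_bernC_nonneg (hb : 0 ≤ b) (k : ℕ) : 0 ≤ stepPMF (bernC b ν) k := by
  unfold stepPMF; split
  · exact le_refl 0
  · exact bernC_nonneg hb k

lemma hasSum_bern (hb : 0 ≤ b)
    (hνfin : IntegrableOn (fun s => min 1 s) (Set.Ioi (0 : ℝ)) ν)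
    {ψ : ℝ → ℝ}
    (hψ : ∀ x : ℝ, 0 ≤ x → ψ x = b * x + ∫ s in Set.Ioi (0:ℝ), (1 - Real.exp (-(x*s))) ∂ν)
    {t : ℝ} (ht0 : 0 ≤ t) (ht1 : t ≤ 1) :
    HasSum (fun k => stepPMF (bernC b ν) k * (1 - t ^ k)) (ψ (1 - t)) := by
  set f : ℕ → ℝ → ℝ := fun k s => s ^ k * Real.exp (-s) * ((1 - t ^ k) / k.factorial) with hf
  have hf0 : f 0 = fun _ => 0 := by funext s; simp [hf]
  have hintf : ∀ k, IntegrableOn (f k) (Set.Ioi (0:ℝ)) ν := by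
    intro k
    rcases Nat.eq_zero_or_pos k with rfl | hk
    · rw [hf0]; exact integrableOn_zero
    · exact (integrableOn_pow_exp hνfin hk).mul_const _
  have hfnn : ∀ k, ∀ s ∈ Set.Ioi (0:ℝ), 0 ≤ f k s := by
    intro k s hs
    have hs' : (0:ℝ) < s := hs
    have htk : t ^ k ≤ 1 := pow_le_one₀ ht0 ht1
    have : (0:ℝ) ≤ 1 - t ^ k := by linarith
    simp only [hf]; positivity
  have hterm : ∀ k, stepPMF (bernC b ν) k * (1 - t ^ k)
      = (∫ s in Set.Ioi (0:ℝ), f k s ∂ν) + (if k = 1 then b * (1 - t) else 0) := by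
    intro k
    rcases Nat.eq_zero_or_pos k with rfl | hk
    · simp [stepPMF, hf0]
    · have hk0 : k ≠ 0 := hk.ne'
      have : (∫ s in Set.Ioi (0:ℝ), f k s ∂ν)
          = (∫ s in Set.Ioi (0:ℝ), s ^ k * Real.exp (-s) ∂ν) * ((1 - t ^ k) / k.factorial) := by
        simp only [hf]
        exact integral_mul_const _ _
      rw [this]
      simp only [stepPMF, bernC, if_neg hk0]
      rcases eq_or_ne k 1 with rfl | hk1
      · simp; ring
      · simp [hk1]; ring
  have hpartial : ∀ K, ∑ k ∈ Finset.range K, stepPMF (bernC b ν) k * (1 - t ^ k)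
      = (∫ s in Set.Ioi (0:ℝ), (∑ k ∈ Finset.range K, f k s) ∂ν)
        + (if 1 ∈ Finset.range K then b * (1 - t) else 0) := by
    intro K
    rw [integral_finset_sum _ fun k _ => hintf k]
    rw [Finset.sum_congr rfl fun k _ => hterm k, Finset.sum_add_distrib]
    congr 1
    exact Finset.sum_ite_eq' (Finset.range K) 1 (fun _ => b * (1 - t))
  -- monotone convergence
  set F : ℝ → ℝ := fun s => 1 - Real.exp (-((1 - t) * s)) with hF
  have hu0 : (0:ℝ) ≤ 1 - t := by linarith
  have hu1 : (1:ℝ) - t ≤ 1 := by linarith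
  have hintF : IntegrableOn F (Set.Ioi (0:ℝ)) ν := integrableOn_one_sub_exp hνfin hu0 hu1
  have htendI : Tendsto (fun K => ∫ s in Set.Ioi (0:ℝ), (∑ k ∈ Finset.range K, f k s) ∂ν)
      atTop (𝓝 (∫ s in Set.Ioi (0:ℝ), F s ∂ν)) := by
    apply integral_tendsto_of_tendsto_of_monotone
    · intro K; exact integrable_finset_sum _ fun k _ => hintf k
    · exact hintF
    · refine (ae_restrict_iff' measurableSet_Ioi).mpr (Filter.Eventually.of_forall fun s hs => ?_)
      intro K L hKL
      exact Finset.sum_le_sum_of_subset_of_nonneg (Finset.range_subset_range.mpr hKL)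
        (fun k _ _ => hfnn k s hs)
    · refine (ae_restrict_iff' measurableSet_Ioi).mpr (Filter.Eventually.of_forall fun s hs => ?_)
      have hsum : ∀ K, ∑ k ∈ Finset.range K, f k s
          = (∑ k ∈ Finset.range K, s ^ k / k.factorial) * Real.exp (-s)
            - (∑ k ∈ Finset.range K, (s * t) ^ k / k.factorial) * Real.exp (-s) := by
        intro K
        rw [Finset.sum_mul, Finset.sum_mul, ← Finset.sum_sub_distrib]
        refine Finset.sum_congr rfl fun k _ => ?_
        simp only [hf, mul_pow]
        field_simp
      have hA := (hasSum_exp_real s).tendsto_sum_nat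
      have hB := (hasSum_exp_real (s * t)).tendsto_sum_nat
      have : Tendsto (fun K => (∑ k ∈ Finset.range K, s ^ k / k.factorial) * Real.exp (-s)
            - (∑ k ∈ Finset.range K, (s * t) ^ k / k.factorial) * Real.exp (-s)) atTop
          (𝓝 (Real.exp s * Real.exp (-s) - Real.exp (s * t) * Real.exp (-s))) :=
        (hA.mul_const _).sub (hB.mul_const _)
      have hval : Real.exp s * Real.exp (-s) - Real.exp (s * t) * Real.exp (-s) = F s := by
        rw [← Real.exp_add, ← Real.exp_add, hF]
        have h1 : s + -s = 0 := by ring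
        have h2 : s * t + -s = -((1 - t) * s) := by ring
        rw [h1, h2, Real.exp_zero]
      rw [hval] at this
      exact this.congr fun K => (hsum K).symm
  have htendIte : Tendsto (fun K => if 1 ∈ Finset.range K then b * (1 - t) else 0) atTop
      (𝓝 (b * (1 - t))) := by
    apply Tendsto.congr' _ tendsto_const_nhds
    filter_upwards [eventually_ge_atTop 2] with K hK
    rw [if_pos (Finset.mem_range.mpr (by omega))]
  have htot : Tendsto (fun K => ∑ k ∈ Finset.range K, stepPMF (bernC b ν) k * (1 - t ^ k))
      atTop (𝓝 (ψ (1 - t))) := by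
    have := htendI.add htendIte
    rw [hψ (1 - t) hu0]
    have heq : (∫ s in Set.Ioi (0:ℝ), F s ∂ν) + b * (1 - t)
        = b * (1 - t) + ∫ s in Set.Ioi (0:ℝ), (1 - Real.exp (-((1 - t) * s))) ∂ν := by
      rw [add_comm]
    rw [← heq]
    exact this.congr fun K => (hpartial K).symm
  have hnn : ∀ k, 0 ≤ stepPMF (bernC b ν) k * (1 - t ^ k) := by
    intro k
    have htk : t ^ k ≤ 1 := pow_le_one₀ ht0 ht1
    exact mul_nonneg (stepPMF_bernC_nonneg hb k) (by linarith)
  have hmono : Monotone (fun K => ∑ k ∈ Finset.range K, stepPMF (bernC b ν) k * (1 - t ^ k)) :=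
    fun K L hKL => Finset.sum_le_sum_of_subset_of_nonneg (Finset.range_subset_range.mpr hKL)
      (fun k _ _ => hnn k)
  have hsummable : Summable (fun k => stepPMF (bernC b ν) k * (1 - t ^ k)) :=
    summable_of_sum_range_le hnn (fun K => hmono.ge_of_tendsto htot K)
  exact (hsummable.hasSum_iff_tendsto_nat).mpr htot
end Bern

lemma one_sub_pow_le {a : ℝ} (h0 : 0 ≤ a) (h1 : a ≤ 1) (n : ℕ) : 1 - a ^ n ≤ n * (1 - a) := by
  induction n with
  | zero => simp
  | succ n ih =>
    have hp : a ^ n ≤ 1 := pow_le_one₀ h0 h1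
    have : 1 - a ^ (n + 1) = (1 - a) + a * (1 - a ^ n) := by ring
    rw [this]
    have : a * (1 - a ^ n) ≤ 1 * (n * (1 - a)) := by
      apply mul_le_mul h1 ih (by linarith) zero_le_one
    push_cast
    nlinarith

lemma exp_convex_bound {t : ℝ} (h0 : 0 ≤ t) (h1 : t ≤ 1) :
    Real.exp (-t) ≤ (1 - t) + t * Real.exp (-1) := by
  have := convexOn_exp.2 (Set.mem_univ (0:ℝ)) (Set.mem_univ (-1:ℝ)) (by linarith : (0:ℝ) ≤ 1 - t) h0 (by ring)
  simpa [smul_eq_mul, mul_comm] using this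

-- min(k, x) ≤ e * (x * (1 - q^k)) with q = exp(-1/x)
lemma min_le_exp_bound (k : ℕ) {x : ℝ} (hx : 0 < x) :
    min (k : ℝ) x ≤ Real.exp 1 * (x * (1 - Real.exp (-(1 / x)) ^ k)) := by
  have hq : Real.exp (-(1 / x)) ^ k = Real.exp (-(k / x)) := by
    rw [← Real.exp_nat_mul]; ring_nf
  rw [hq]
  set t : ℝ := (k : ℝ) / x with ht
  have ht0 : 0 ≤ t := by positivity
  have he : (2:ℝ) ≤ Real.exp 1 := by
    have := Real.add_one_le_exp (1:ℝ); linarith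
  have hexp1 : Real.exp (-1) * Real.exp 1 = 1 := by rw [← Real.exp_add]; simp
  rcases le_or_gt t 1 with h | h
  · -- min = k = x * t possibly; k ≤ x
    have hkx : (k:ℝ) ≤ x := by
      rw [ht] at h; calc (k:ℝ) = (k/x) * x := by field_simp
        _ ≤ 1 * x := by nlinarith
        _ = x := one_mul x
    rw [min_eq_left hkx]
    have hcb := exp_convex_bound ht0 h
    -- 1 - exp(-t) ≥ t (1 - exp(-1))
    have key : t * (1 - Real.exp (-1)) ≤ 1 - Real.exp (-t) := by linarith
    have hk : (k:ℝ) = x * t := by rw [ht]; field_simp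
    rw [hk]
    calc x * t ≤ x * (Real.exp 1 * (1 - Real.exp (-t))) := by
          apply mul_le_mul_of_nonneg_left _ hx.le
          nlinarith [Real.exp_pos (-t), Real.exp_pos (-1)]
      _ = Real.exp 1 * (x * (1 - Real.exp (-t))) := by ring
  · have hxk : x ≤ (k:ℝ) := by
      by_contra hc
      push_neg at hc
      have : (k:ℝ)/x < 1 := by rw [div_lt_one hx]; exact hc
      rw [ht] at h; linarith
    rw [min_eq_right hxk]
    have : Real.exp (-t) ≤ Real.exp (-1) := Real.exp_le_exp.mpr (by linarith)
    calc x = x * 1 := (mul_one x).symm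
      _ ≤ Real.exp 1 * (x * (1 - Real.exp (-1))) := by nlinarith [Real.exp_pos (-1)]
      _ ≤ Real.exp 1 * (x * (1 - Real.exp (-t))) := by
          nlinarith [mul_pos (Real.exp_pos 1) hx]

lemma tauPMF_nonneg {c : ℕ → ℝ} (hc : ∀ k, 0 ≤ stepPMF c k) : ∀ n k, 0 ≤ tauPMF c n k := by
  intro n
  induction n with
  | zero => intro k; simp only [tauPMF]; split <;> norm_num
  | succ n ih =>
    intro k
    simp only [tauPMF]
    exact Finset.sum_nonneg fun j _ => mul_nonneg (ih j) (hc _)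

lemma hasSum_tau {c : ℕ → ℝ} (hc : ∀ k, 0 ≤ stepPMF c k) {t : ℝ} (ht0 : 0 ≤ t)
    {G : ℝ} (hGsum : HasSum (fun k => stepPMF c k * t ^ k) G) (n : ℕ) :
    HasSum (fun k => tauPMF c n k * t ^ k) (G ^ n) := by
  induction n with
  | zero =>
    have he : (fun k => tauPMF c 0 k * t ^ k) = fun k => if k = 0 then (1:ℝ) else 0 := by
      funext k
      rcases eq_or_ne k 0 with rfl | h
      · simp [tauPMF]
      · simp [tauPMF, h]
    rw [he, pow_zero]
    exact hasSum_ite_eq (0:ℕ) (1:ℝ)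
  | succ n ih =>
    set f : ℕ → ℝ := fun k => tauPMF c n k * t ^ k with hfdef
    set g : ℕ → ℝ := fun k => stepPMF c k * t ^ k with hgdef
    have hfnn : ∀ k, 0 ≤ f k := fun k => mul_nonneg (tauPMF_nonneg hc n k) (pow_nonneg ht0 k)
    have hgnn : ∀ k, 0 ≤ g k := fun k => mul_nonneg (hc k) (pow_nonneg ht0 k)
    have hfn : Summable (fun k => ‖f k‖) := by
      have : (fun k => ‖f k‖) = f := funext fun k => by
        rw [Real.norm_eq_abs, abs_of_nonneg (hfnn k)]
      rw [this]; exact ih.summable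
    have hgn : Summable (fun k => ‖g k‖) := by
      have : (fun k => ‖g k‖) = g := funext fun k => by
        rw [Real.norm_eq_abs, abs_of_nonneg (hgnn k)]
      rw [this]; exact hGsum.summable
    have key := tsum_mul_tsum_eq_tsum_sum_range_of_summable_norm hfn hgn
    have hsum2 : Summable (fun m => ∑ k ∈ Finset.range (m + 1), f k * g (m - k)) :=
      (summable_norm_sum_mul_range_of_summable_norm hfn hgn).of_norm
    have heq : (fun m => tauPMF c (n+1) m * t ^ m)
        = fun m => ∑ k ∈ Finset.range (m + 1), f k * g (m - k) := by
      funext m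
      simp only [tauPMF, Finset.sum_mul, hfdef, hgdef]
      refine Finset.sum_congr rfl fun j hj => ?_
      have hjm : j ≤ m := Nat.lt_succ_iff.mp (Finset.mem_range.mp hj)
      have hpow : t ^ j * t ^ (m - j) = t ^ m := by rw [← pow_add]; congr 1; omega
      calc tauPMF c n j * stepPMF c (m - j) * t ^ m
          = tauPMF c n j * stepPMF c (m - j) * (t ^ j * t ^ (m - j)) := by rw [hpow]
        _ = tauPMF c n j * t ^ j * (stepPMF c (m - j) * t ^ (m - j)) := by ring
    rw [heq, pow_succ]
    have hres := hsum2.hasSum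
    rw [← key, ih.tsum_eq, hGsum.tsum_eq] at hres
    exact hres

lemma vol_inter {x : ℝ} (hx : 0 < x) (k : ℕ) :
    volume (Ioc (0:ℝ) x ∩ Iio (k:ℝ)) = ENNReal.ofReal (min x k) := by
  rcases le_or_gt (k:ℝ) x with h | h
  · have hs : Ioc (0:ℝ) x ∩ Iio (k:ℝ) = Ioo 0 (k:ℝ) := by
      ext y
      simp only [mem_inter_iff, mem_Ioc, mem_Iio, mem_Ioo]
      constructor
      · rintro ⟨⟨h1, _⟩, h3⟩; exact ⟨h1, h3⟩
      · rintro ⟨h1, h3⟩; exact ⟨⟨h1, le_trans h3.le h⟩, h3⟩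
    rw [hs, Real.volume_Ioo, min_eq_right h]
    norm_num
  · have hs : Ioc (0:ℝ) x ∩ Iio (k:ℝ) = Ioc 0 x :=
      inter_eq_left.mpr fun y hy => lt_of_le_of_lt hy.2 h
    rw [hs, Real.volume_Ioc, min_eq_left h.le]
    norm_num

lemma tail_eq (c : ℕ → ℝ) (n : ℕ) (h1 : HasSum (tauPMF c n) 1)
    {y : ℝ} (hy : 0 ≤ y) :
    1 - cdfTau c n y = ∑' k, (Set.Iio ((k:ℕ):ℝ)).indicator (fun _ => tauPMF c n k) y := by
  set p := tauPMF c n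
  set s := Finset.range (⌊y⌋₊ + 1) with hs
  have hind : ∀ k : ℕ, (Set.Iio ((k:ℕ):ℝ)).indicator (fun _ => p k) y
      = if k ∈ s then 0 else p k := by
    intro k
    have hmem : y ∈ Set.Iio ((k:ℕ):ℝ) ↔ k ∉ s := by
      simp only [mem_Iio, hs, Finset.mem_range]
      rw [← Nat.floor_lt hy]
      omega
    by_cases hk : k ∈ s
    · rw [if_pos hk, Set.indicator_of_notMem (by simpa [hmem] using hk)]
    · rw [if_neg hk, Set.indicator_of_mem (hmem.mpr hk)]
  have hg : HasSum (fun k => if k ∈ s then p k else 0) (∑ k ∈ s, p k) := by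
    have h : HasSum (fun k => if k ∈ s then p k else 0) (∑ b ∈ s, (if b ∈ s then p b else 0)) :=
      hasSum_sum_of_ne_finset_zero (s := s)
      (f := fun k => if k ∈ s then p k else 0) (fun k hk => if_neg hk)
    have he : ∑ b ∈ s, (if b ∈ s then p b else 0) = ∑ k ∈ s, p k :=
      Finset.sum_congr rfl fun b hb => if_pos hb
    rwa [he] at h
  have hsub := h1.sub hg
  have hfun : (fun k => p k - if k ∈ s then p k else 0) = fun k => if k ∈ s then 0 else p k := by
    funext k; by_cases hk : k ∈ s <;> simp [hk]
  rw [hfun] at hsub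
  have hc : cdfTau c n y = ∑ k ∈ s, p k := by
    rw [cdfTau, if_neg (not_lt.mpr hy)]
  rw [hc, ← hsub.tsum_eq]
  exact tsum_congr fun k => (hind k).symm

lemma integral_eq_tsum_min (c : ℕ → ℝ) (n : ℕ) (hp : ∀ k, 0 ≤ tauPMF c n k)
    (h1 : HasSum (tauPMF c n) 1) {x : ℝ} (hx : 0 < x) :
    ∫ y in (0:ℝ)..x, (1 - cdfTau c n y) = ∑' k : ℕ, tauPMF c n k * min x k := by
  set p := tauPMF c n with hpdef
  set f : ℕ → ℝ → ℝ := fun k y => (Set.Iio ((k:ℕ):ℝ)).indicator (fun _ => p k) y with hfdef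
  have hmeas : ∀ k, AEStronglyMeasurable (f k) (volume.restrict (Ioc (0:ℝ) x)) := fun k =>
    (stronglyMeasurable_const.indicator measurableSet_Iio).aestronglyMeasurable
  have hbound : ∑' k, ∫⁻ y, ‖f k y‖₊ ∂(volume.restrict (Ioc (0:ℝ) x)) ≠ ⊤ := by
    have hle : ∀ k, ∫⁻ y, ‖f k y‖₊ ∂(volume.restrict (Ioc (0:ℝ) x))
        ≤ ENNReal.ofReal (p k) * ENNReal.ofReal x := by
      intro k
      have h1' : ∀ y, (‖f k y‖₊ : ℝ≥0∞) ≤ ENNReal.ofReal (p k) := by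
        intro y
        by_cases hy : y ∈ Set.Iio ((k:ℕ):ℝ)
        · simp only [hfdef, Set.indicator_of_mem hy]
          exact (Real.enorm_eq_ofReal (hp k)).le
        · simp [hfdef, Set.indicator_of_notMem hy]
      calc ∫⁻ y, ‖f k y‖₊ ∂(volume.restrict (Ioc (0:ℝ) x))
          ≤ ∫⁻ _, ENNReal.ofReal (p k) ∂(volume.restrict (Ioc (0:ℝ) x)) := lintegral_mono h1'
        _ = ENNReal.ofReal (p k) * volume (Ioc (0:ℝ) x) := by
            rw [lintegral_const, Measure.restrict_apply_univ]
        _ = ENNReal.ofReal (p k) * ENNReal.ofReal x := by rw [Real.volume_Ioc]; norm_num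
    refine ne_top_of_le_ne_top ?_ (ENNReal.tsum_le_tsum hle)
    rw [ENNReal.tsum_mul_right, ← ENNReal.ofReal_tsum_of_nonneg hp h1.summable, h1.tsum_eq]
    exact ENNReal.mul_ne_top (by simp) (by simp)
  rw [intervalIntegral.integral_of_le hx.le]
  rw [setIntegral_congr_fun measurableSet_Ioc (fun y hy => tail_eq c n h1 hy.1.le)]
  rw [integral_tsum hmeas hbound]
  refine tsum_congr fun k => ?_
  rw [setIntegral_indicator measurableSet_Iio, setIntegral_const, measureReal_def, vol_inter hx k,
    ENNReal.toReal_ofReal (le_min hx.le (Nat.cast_nonneg k)), smul_eq_mul, mul_comm]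

end Helpers

/-- There is `C > 0` (one may take `C = e`) such that for every `n ≥ 1` and `x > 0`,
`ℱ_n(x) = ∫_0^x (1 - F_n(y)) dy ≤ C · x · n · ψ(1 - e^{-1/x})`. -/
theorem integral_tail_upper_bound
    (α : ℝ) (hα0 : 0 < α) (hα2 : α < 2)
    (b : ℝ) (hb : 0 ≤ b) (ν : Measure ℝ)
    (hνfin : IntegrableOn (fun s => min 1 s) (Set.Ioi (0 : ℝ)) ν)
    (ψ : ℝ → ℝ)
    (hψ : ∀ x : ℝ, 0 ≤ x →
      ψ x = b * x + ∫ s in Set.Ioi (0 : ℝ), (1 - Real.exp (-(x * s))) ∂ν)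
    (hψ0 : ψ 0 = 0) (hψ1 : ψ 1 = 1)
    :
    ∃ C : ℝ, 0 < C ∧ ∀ n : ℕ, 1 ≤ n → ∀ x : ℝ, 0 < x →
      (∫ y in (0 : ℝ)..x, (1 - cdfTau (bernC b ν) n y)) ≤
        C * x * n * ψ (1 - Real.exp (-(1 / x))) := by
  refine ⟨Real.exp 1, Real.exp_pos 1, ?_⟩
  intro n hn x hx
  set c := bernC b ν with hcdef
  have hcnn : ∀ k, 0 ≤ stepPMF c k := stepPMF_bernC_nonneg hb
  set q := Real.exp (-(1 / x)) with hqdef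
  have hq0 : 0 ≤ q := (Real.exp_pos _).le
  have hq1 : q ≤ 1 := Real.exp_le_one_iff.mpr (by
    have : 0 ≤ 1 / x := by positivity
    linarith)
  have hSq : HasSum (fun k => stepPMF c k * (1 - q ^ k)) (ψ (1 - q)) :=
    hasSum_bern hb hνfin hψ hq0 hq1
  have hS1 : HasSum (fun k => stepPMF c k) 1 := by
    have h0 := hasSum_bern hb hνfin hψ (le_refl (0 : ℝ)) zero_le_one
    rw [sub_zero, hψ1] at h0
    have heq : (fun k => stepPMF c k * (1 - (0:ℝ) ^ k)) = fun k => stepPMF c k := by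
      funext k
      rcases eq_or_ne k 0 with rfl | h
      · simp [stepPMF]
      · simp [zero_pow h]
    rwa [heq] at h0
  have hGq : HasSum (fun k => stepPMF c k * q ^ k) (1 - ψ (1 - q)) := by
    have h := hS1.sub hSq
    have heq : (fun k => stepPMF c k - stepPMF c k * (1 - q ^ k))
        = fun k => stepPMF c k * q ^ k := by funext k; ring
    rwa [heq] at h
  have hψnn : 0 ≤ ψ (1 - q) := hSq.nonneg fun k => by
    have := pow_le_one₀ hq0 hq1 (n := k)
    exact mul_nonneg (hcnn k) (by linarith)
  have hGnn : 0 ≤ 1 - ψ (1 - q) := hGq.nonneg fun k =>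
    mul_nonneg (hcnn k) (pow_nonneg hq0 k)
  have hτ1 : HasSum (tauPMF c n) 1 := by
    have hstep1 : HasSum (fun k => stepPMF c k * (1:ℝ) ^ k) 1 := by
      simpa using hS1
    have h := hasSum_tau hcnn zero_le_one hstep1 n
    simpa using h
  have hτq : HasSum (fun k => tauPMF c n k * q ^ k) ((1 - ψ (1 - q)) ^ n) :=
    hasSum_tau hcnn hq0 hGq n
  have hτnn : ∀ k, 0 ≤ tauPMF c n k := tauPMF_nonneg hcnn n
  have hτsub : HasSum (fun k => tauPMF c n k * (1 - q ^ k))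
      (1 - (1 - ψ (1 - q)) ^ n) := by
    have h := hτ1.sub hτq
    have heq : (fun k => tauPMF c n k - tauPMF c n k * q ^ k)
        = fun k => tauPMF c n k * (1 - q ^ k) := by funext k; ring
    rwa [heq] at h
  have hRHS : HasSum (fun k => tauPMF c n k * (Real.exp 1 * (x * (1 - q ^ k))))
      ((Real.exp 1 * x) * (1 - (1 - ψ (1 - q)) ^ n)) := by
    have h := hτsub.mul_left (Real.exp 1 * x)
    have heq : (fun k => (Real.exp 1 * x) * (tauPMF c n k * (1 - q ^ k)))
        = fun k => tauPMF c n k * (Real.exp 1 * (x * (1 - q ^ k))) := by funext k; ring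
    rwa [heq] at h
  have hminle : ∀ k : ℕ, min x (k:ℝ) ≤ Real.exp 1 * (x * (1 - q ^ k)) := by
    intro k
    rw [min_comm]
    exact min_le_exp_bound k hx
  have hLHSsummable : Summable (fun k => tauPMF c n k * min x (k:ℝ)) :=
    Summable.of_nonneg_of_le
      (fun k => mul_nonneg (hτnn k) (le_min hx.le (Nat.cast_nonneg k)))
      (fun k => mul_le_mul_of_nonneg_left (hminle k) (hτnn k))
      hRHS.summable
  rw [integral_eq_tsum_min c n hτnn hτ1 hx]
  calc ∑' k : ℕ, tauPMF c n k * min x (k:ℝ)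
      ≤ ∑' k : ℕ, tauPMF c n k * (Real.exp 1 * (x * (1 - q ^ k))) :=
        Summable.tsum_le_tsum (fun k => mul_le_mul_of_nonneg_left (hminle k) (hτnn k))
          hLHSsummable hRHS.summable
    _ = (Real.exp 1 * x) * (1 - (1 - ψ (1 - q)) ^ n) := hRHS.tsum_eq
    _ ≤ (Real.exp 1 * x) * (n * ψ (1 - q)) := by
        apply mul_le_mul_of_nonneg_left _ (by positivity)
        have := one_sub_pow_le hGnn (by linarith) n
        linarith
    _ = Real.exp 1 * x * n * ψ (1 - q) := by ring
end
end

section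
/- Under the stated assumptions, for all ξ ∈ ℝ^d one has Φ_ψ(ξ) = 1 − ψ(1 − Φ(ξ)), where on the right-hand side ψ denotes its holomorphic extension to the closed right half-plane. (Lemma 4.4 of the paper.) -/
open MeasureTheory Filter Topology

noncomputable section

/-- Holomorphic extension of the Bernstein function (with `a = 0`) to the closed right
half-plane: `ψ(z) = b z + ∫ (1 - e^{-z s}) dν(s)`. -/
def psiC (b : ℝ) (ν : MeasureTheory.Measure ℝ) (z : ℂ) : ℂ :=
  b * z + ∫ s in Set.Ioi (0 : ℝ), (1 - Complex.exp (-(z * (s : ℂ)))) ∂ν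

/-- `n`-fold convolution power `p^{(n)}` of a density `p` on `ℤ^d`; `p^{(0)} = δ_0`. -/
def convPow {d : ℕ} (p : (Fin d → ℤ) → ℝ) : ℕ → (Fin d → ℤ) → ℝ
  | 0 => fun x => if x = 0 then 1 else 0
  | n + 1 => fun x => ∑' y : Fin d → ℤ, convPow p n y * p (x - y)

/-- Characteristic function `Φ_q(ξ) = Σ_{x ∈ ℤ^d} q(x) e^{i⟨ξ,x⟩}` of a density `q` on `ℤ^d`. -/
def charFn {d : ℕ} (q : (Fin d → ℤ) → ℝ) (ξ : Fin d → ℝ) : ℂ :=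
  ∑' x : Fin d → ℤ, (q x : ℂ) * Complex.exp (Complex.I * ((∑ i, ξ i * (x i : ℝ) : ℝ) : ℂ))

/-- One-step density of the subordinate random walk: `p_ψ(x) = Σ_{k ≥ 1} p(x,k) c(ψ,k)`. -/
def subStep {d : ℕ} (p : (Fin d → ℤ) → ℝ) (c : ℕ → ℝ) (x : Fin d → ℤ) : ℝ :=
  ∑' k : ℕ, convPow p (k + 1) x * c (k + 1)

namespace SubWalkAux


variable {d : ℕ}

def eterm (ξ : Fin d → ℝ) (x : Fin d → ℤ) : ℂ :=
  Complex.exp (Complex.I * ((∑ i, ξ i * (x i : ℝ) : ℝ) : ℂ))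

lemma charFn_eq (q : (Fin d → ℤ) → ℝ) (ξ : Fin d → ℝ) :
    charFn q ξ = ∑' x : Fin d → ℤ, (q x : ℂ) * eterm ξ x := rfl

lemma norm_eterm (ξ : Fin d → ℝ) (x : Fin d → ℤ) : ‖eterm ξ x‖ = 1 := by
  rw [eterm, Complex.norm_exp]
  simp [Complex.mul_re]

lemma eterm_zero (ξ : Fin d → ℝ) : eterm ξ 0 = 1 := by
  simp [eterm]

lemma eterm_add (ξ : Fin d → ℝ) (x y : Fin d → ℤ) :
    eterm ξ (x + y) = eterm ξ x * eterm ξ y := by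
  rw [eterm, eterm, eterm, ← Complex.exp_add, ← mul_add, ← Complex.ofReal_add,
    ← Finset.sum_add_distrib]
  congr 3
  refine Finset.sum_congr rfl fun i _ => ?_
  simp [Pi.add_apply]
  push_cast
  ring

def shearEquiv (G : Type*) [AddGroup G] : G × G ≃ G × G where
  toFun := fun yz => (yz.2 + yz.1, yz.1)
  invFun := fun xy => (xy.2, xy.1 - xy.2)
  left_inv := fun yz => by simp
  right_inv := fun xy => by simp


variable {p q : (Fin d → ℤ) → ℝ}

lemma conv_summable_prod (hp0 : ∀ x, 0 ≤ p x) (hq0 : ∀ x, 0 ≤ q x)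
    (hp : Summable p) (hq : Summable q) :
    Summable (fun xy : (Fin d → ℤ) × (Fin d → ℤ) => q xy.2 * p (xy.1 - xy.2)) := by
  rw [← (shearEquiv (Fin d → ℤ)).summable_iff]
  have : ((fun xy : (Fin d → ℤ) × (Fin d → ℤ) => q xy.2 * p (xy.1 - xy.2)) ∘
      (shearEquiv (Fin d → ℤ))) = fun yz : (Fin d → ℤ) × (Fin d → ℤ) => q yz.1 * p yz.2 := by
    funext yz
    simp [shearEquiv]
  rw [this]
  exact hq.mul_of_nonneg hp hq0 hp0

lemma conv_nonneg (hp0 : ∀ x, 0 ≤ p x) (hq0 : ∀ x, 0 ≤ q x) (x : Fin d → ℤ) :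
    0 ≤ ∑' y, q y * p (x - y) :=
  tsum_nonneg fun y => mul_nonneg (hq0 y) (hp0 _)

lemma conv_summable (hp0 : ∀ x, 0 ≤ p x) (hq0 : ∀ x, 0 ≤ q x)
    (hp : Summable p) (hq : Summable q) :
    Summable (fun x => ∑' y, q y * p (x - y)) := by
  have h := conv_summable_prod hp0 hq0 hp hq
  exact ((summable_prod_of_nonneg (f := fun xy : (Fin d → ℤ) × (Fin d → ℤ) =>
    q xy.2 * p (xy.1 - xy.2)) (fun xy => mul_nonneg (hq0 _) (hp0 _))).1 h).2

lemma conv_summable_prod_C (hp0 : ∀ x, 0 ≤ p x) (hq0 : ∀ x, 0 ≤ q x)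
    (hp : Summable p) (hq : Summable q) (ξ : Fin d → ℝ) :
    Summable (fun xy : (Fin d → ℤ) × (Fin d → ℤ) =>
      ((q xy.2 : ℂ) * (p (xy.1 - xy.2) : ℂ)) * eterm ξ xy.1) := by
  apply Summable.of_norm
  have : (fun xy : (Fin d → ℤ) × (Fin d → ℤ) =>
      ‖((q xy.2 : ℂ) * (p (xy.1 - xy.2) : ℂ)) * eterm ξ xy.1‖) =
      fun xy : (Fin d → ℤ) × (Fin d → ℤ) => q xy.2 * p (xy.1 - xy.2) := by
    funext xy
    rw [norm_mul, norm_mul, norm_eterm, mul_one, Complex.norm_real, Complex.norm_real,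
      Real.norm_of_nonneg (hq0 _), Real.norm_of_nonneg (hp0 _)]
  rw [this]
  exact conv_summable_prod hp0 hq0 hp hq

lemma charFn_conv (hp0 : ∀ x, 0 ≤ p x) (hq0 : ∀ x, 0 ≤ q x)
    (hp : Summable p) (hq : Summable q) (ξ : Fin d → ℝ) :
    charFn (fun x => ∑' y, q y * p (x - y)) ξ = charFn q ξ * charFn p ξ := by
  have hF := conv_summable_prod_C hp0 hq0 hp hq ξ
  rw [charFn_eq]
  have step1 : ∀ x : Fin d → ℤ, ((∑' y, q y * p (x - y) : ℝ) : ℂ) * eterm ξ x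
      = ∑' y, ((q y : ℂ) * (p (x - y) : ℂ)) * eterm ξ x := by
    intro x
    rw [Complex.ofReal_tsum, tsum_mul_right]
    push_cast
    rfl
  calc ∑' x, ((∑' y, q y * p (x - y) : ℝ) : ℂ) * eterm ξ x
      = ∑' x, ∑' y, ((q y : ℂ) * (p (x - y) : ℂ)) * eterm ξ x := by
        exact tsum_congr step1
    _ = ∑' xy : (Fin d → ℤ) × (Fin d → ℤ),
        ((q xy.2 : ℂ) * (p (xy.1 - xy.2) : ℂ)) * eterm ξ xy.1 := (Summable.tsum_prod' hF (fun b => hF.prod_factor b)).symm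
    _ = ∑' yz : (Fin d → ℤ) × (Fin d → ℤ),
        ((q yz.1 : ℂ) * eterm ξ yz.1) * ((p yz.2 : ℂ) * eterm ξ yz.2) := by
        rw [← (shearEquiv (Fin d → ℤ)).tsum_eq (f := fun xy : (Fin d → ℤ) × (Fin d → ℤ) =>
          ((q xy.2 : ℂ) * (p (xy.1 - xy.2) : ℂ)) * eterm ξ xy.1)]
        refine tsum_congr fun yz => ?_
        simp only [shearEquiv, Equiv.coe_fn_mk]
        rw [add_sub_cancel_right, eterm_add]
        ring
    _ = (∑' y, (q y : ℂ) * eterm ξ y) * (∑' z, (p z : ℂ) * eterm ξ z) := by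
        refine (tsum_mul_tsum_of_summable_norm (f := fun y : Fin d → ℤ => (q y : ℂ) * eterm ξ y)
          (g := fun z : Fin d → ℤ => (p z : ℂ) * eterm ξ z) ?_ ?_).symm
        · refine Summable.of_nonneg_of_le (fun _ => norm_nonneg _) (fun y => ?_) hq
          rw [norm_mul, norm_eterm, mul_one, Complex.norm_real]
          exact le_of_eq (Real.norm_of_nonneg (hq0 y))
        · refine Summable.of_nonneg_of_le (fun _ => norm_nonneg _) (fun y => ?_) hp
          rw [norm_mul, norm_eterm, mul_one, Complex.norm_real]
          exact le_of_eq (Real.norm_of_nonneg (hp0 y))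
    _ = charFn q ξ * charFn p ξ := rfl


section ConvPow

variable (hp0 : ∀ x, 0 ≤ p x) (hp : Summable p)
include hp0 hp

omit hp in
lemma convPow_nonneg (n : ℕ) : ∀ x, 0 ≤ convPow p n x := by
  induction n with
  | zero => intro x; simp only [convPow]; positivity
  | succ n ih => intro x; exact conv_nonneg hp0 ih x

lemma convPow_summable (n : ℕ) : Summable (convPow p n) := by
  induction n with
  | zero =>
      apply summable_of_ne_finset_zero (s := {(0 : Fin d → ℤ)})
      intro x hx
      simp only [Finset.mem_singleton] at hx
      simp [convPow, hx]
  | succ n ih => exact conv_summable hp0 (convPow_nonneg hp0 n) hp ih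

lemma charFn_convPow (n : ℕ) (ξ : Fin d → ℝ) :
    charFn (convPow p n) ξ = (charFn p ξ) ^ n := by
  induction n with
  | zero =>
      rw [charFn_eq, pow_zero]
      rw [tsum_eq_single (0 : Fin d → ℤ)]
      · simp [convPow, eterm_zero]
      · intro x hx
        simp [convPow, hx]
  | succ n ih =>
      rw [pow_succ, ← ih]
      exact charFn_conv hp0 (convPow_nonneg hp0 n) hp (convPow_summable hp0 hp n)  ξ

omit hp0 hp in
lemma charFn_zero_eq (q : (Fin d → ℤ) → ℝ) : charFn q 0 = ((∑' x, q x : ℝ) : ℂ) := by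
  rw [charFn_eq, Complex.ofReal_tsum]
  refine tsum_congr fun x => ?_
  simp [eterm]

lemma tsum_convPow (hp1 : ∑' x, p x = 1) (n : ℕ) : ∑' x, convPow p n x = 1 := by
  have h := charFn_convPow hp0 hp n (0 : Fin d → ℝ)
  rw [charFn_zero_eq, charFn_zero_eq, hp1] at h
  simpa using Complex.ofReal_injective (by simpa using h)

lemma norm_charFn_le (hp1 : ∑' x, p x = 1) (ξ : Fin d → ℝ) : ‖charFn p ξ‖ ≤ 1 := by
  rw [charFn_eq]
  have hs : Summable fun x => ‖(p x : ℂ) * eterm ξ x‖ := by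
    refine Summable.of_nonneg_of_le (fun _ => norm_nonneg _) (fun y => ?_) hp
    rw [norm_mul, norm_eterm, mul_one, Complex.norm_real]
    exact le_of_eq (Real.norm_of_nonneg (hp0 y))
  refine le_trans (norm_tsum_le_tsum_norm hs) ?_
  calc ∑' x, ‖(p x : ℂ) * eterm ξ x‖ = ∑' x, p x := by
        refine tsum_congr fun x => ?_
        rw [norm_mul, norm_eterm, mul_one, Complex.norm_real, Real.norm_of_nonneg (hp0 x)]
    _ ≤ 1 := le_of_eq hp1

end ConvPow




lemma one_sub_exp_le_min {s : ℝ} (hs : 0 < s) : 1 - Real.exp (-s) ≤ min 1 s := by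
  refine le_min (by have := Real.exp_pos (-s); linarith) ?_
  have h := Real.add_one_le_exp (-s)
  linarith

lemma one_sub_exp_nonneg {s : ℝ} (hs : 0 < s) : 0 ≤ 1 - Real.exp (-s) := by
  have : Real.exp (-s) ≤ 1 := Real.exp_le_one_iff.2 (by linarith)
  linarith

lemma pow_exp_div_fact_le {s : ℝ} (hs : 0 < s) {k : ℕ} (hk : 1 ≤ k) :
    ((k.factorial : ℝ))⁻¹ * (s ^ k * Real.exp (-s)) ≤ 1 - Real.exp (-s) := by
  have h1 : 1 + s ^ k / k.factorial ≤ Real.exp s := by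
    have hsub : ({0, k} : Finset ℕ) ⊆ Finset.range (k + 1) := by
      intro i hi
      simp only [Finset.mem_insert, Finset.mem_singleton] at hi
      rcases hi with h | h <;> simp [h, Nat.lt_succ_iff]
    have hpair : ∑ i ∈ ({0, k} : Finset ℕ), s ^ i / i.factorial = 1 + s ^ k / k.factorial := by
      rw [Finset.sum_pair (by omega : (0 : ℕ) ≠ k)]
      simp
    calc 1 + s ^ k / k.factorial = ∑ i ∈ ({0, k} : Finset ℕ), s ^ i / i.factorial := hpair.symm
      _ ≤ ∑ i ∈ Finset.range (k + 1), s ^ i / i.factorial :=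
          Finset.sum_le_sum_of_subset_of_nonneg hsub (fun i _ _ => by positivity)
      _ ≤ Real.exp s := Real.sum_le_exp_of_nonneg hs.le _
  have h2 : s ^ k / k.factorial ≤ Real.exp s - 1 := by linarith
  have h3 : 0 < Real.exp (-s) := Real.exp_pos _
  calc ((k.factorial : ℝ))⁻¹ * (s ^ k * Real.exp (-s)) = (s ^ k / k.factorial) * Real.exp (-s) := by
        ring
    _ ≤ (Real.exp s - 1) * Real.exp (-s) := by
        exact mul_le_mul_of_nonneg_right h2 h3.le
    _ = 1 - Real.exp (-s) := by
        rw [sub_mul, ← Real.exp_add]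
        simp

variable {ν : Measure ℝ} (hν : IntegrableOn (fun s => min 1 s) (Set.Ioi (0 : ℝ)) ν)
include hν

lemma integrable_one_sub_exp : IntegrableOn (fun s => 1 - Real.exp (-s)) (Set.Ioi (0 : ℝ)) ν := by
  refine Integrable.mono' hν ?_ ?_
  · exact (Continuous.aestronglyMeasurable (by continuity))
  · rw [MeasureTheory.ae_restrict_iff' measurableSet_Ioi]
    refine Filter.Eventually.of_forall fun s hs => ?_
    rw [Set.mem_Ioi] at hs
    rw [Real.norm_of_nonneg (one_sub_exp_nonneg hs)]
    exact one_sub_exp_le_min hs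

lemma integrable_pow_exp {k : ℕ} (hk : 1 ≤ k) :
    IntegrableOn (fun s => s ^ k * Real.exp (-s)) (Set.Ioi (0 : ℝ)) ν := by
  refine Integrable.mono' (hν.const_mul (k.factorial : ℝ)) ?_ ?_
  · exact (Continuous.aestronglyMeasurable (by continuity))
  · rw [MeasureTheory.ae_restrict_iff' measurableSet_Ioi]
    refine Filter.Eventually.of_forall fun s hs => ?_
    rw [Set.mem_Ioi] at hs
    rw [Real.norm_of_nonneg (by positivity)]
    have h := pow_exp_div_fact_le hs hk
    have h2 := one_sub_exp_le_min hs
    have hf : (0 : ℝ) < (k.factorial : ℝ) := by positivity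
    rw [inv_mul_le_iff₀ hf] at h
    calc s ^ k * Real.exp (-s) ≤ (k.factorial : ℝ) * (1 - Real.exp (-s)) := h
      _ ≤ (k.factorial : ℝ) * min 1 s := by
          exact mul_le_mul_of_nonneg_left h2 hf.le


omit hν in
lemma sum_pointwise_le (K : ℕ) {s : ℝ} (hs : 0 < s) :
    ∑ k ∈ Finset.range K, (((k+1).factorial : ℝ))⁻¹ * (s ^ (k+1) * Real.exp (-s)) ≤ min 1 s := by
  have key : ∑ k ∈ Finset.range K, s ^ (k+1) / ((k+1).factorial : ℝ)
      = (∑ i ∈ Finset.range (K+1), s ^ i / (i.factorial : ℝ)) - 1 := by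
    rw [Finset.sum_range_succ' (fun i => s ^ i / (i.factorial : ℝ)) K]
    simp
  have h1 : ∑ k ∈ Finset.range K, s ^ (k+1) / ((k+1).factorial : ℝ) ≤ Real.exp s - 1 := by
    rw [key]
    have := Real.sum_le_exp_of_nonneg hs.le (K+1)
    linarith
  have h3 : (0:ℝ) < Real.exp (-s) := Real.exp_pos _
  calc ∑ k ∈ Finset.range K, (((k+1).factorial : ℝ))⁻¹ * (s ^ (k+1) * Real.exp (-s))
      = (∑ k ∈ Finset.range K, s ^ (k+1) / ((k+1).factorial : ℝ)) * Real.exp (-s) := by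
        rw [Finset.sum_mul]
        refine Finset.sum_congr rfl fun k _ => ?_
        ring
    _ ≤ (Real.exp s - 1) * Real.exp (-s) := mul_le_mul_of_nonneg_right h1 h3.le
    _ = 1 - Real.exp (-s) := by rw [sub_mul, ← Real.exp_add]; simp
    _ ≤ min 1 s := one_sub_exp_le_min hs

omit hν in
lemma J_nonneg (ν : Measure ℝ) (k : ℕ) :
    0 ≤ ((k.factorial : ℝ))⁻¹ * ∫ s in Set.Ioi (0 : ℝ), s ^ k * Real.exp (-s) ∂ν := by
  refine mul_nonneg (by positivity) ?_
  refine setIntegral_nonneg measurableSet_Ioi fun s hs => ?_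
  have : (0:ℝ) < s := hs
  positivity

lemma sum_integral_le (K : ℕ) :
    ∑ k ∈ Finset.range K,
      (((k+1).factorial : ℝ))⁻¹ * ∫ s in Set.Ioi (0 : ℝ), s ^ (k+1) * Real.exp (-s) ∂ν
    ≤ ∫ s in Set.Ioi (0 : ℝ), min 1 s ∂ν := by
  have hint : ∀ k : ℕ, IntegrableOn
      (fun s => (((k+1).factorial : ℝ))⁻¹ * (s ^ (k+1) * Real.exp (-s))) (Set.Ioi (0:ℝ)) ν :=
    fun k => (integrable_pow_exp hν (Nat.succ_le_succ (Nat.zero_le k))).const_mul _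
  calc ∑ k ∈ Finset.range K,
        (((k+1).factorial : ℝ))⁻¹ * ∫ s in Set.Ioi (0 : ℝ), s ^ (k+1) * Real.exp (-s) ∂ν
      = ∑ k ∈ Finset.range K,
        ∫ s in Set.Ioi (0 : ℝ), (((k+1).factorial : ℝ))⁻¹ * (s ^ (k+1) * Real.exp (-s)) ∂ν := by
        refine Finset.sum_congr rfl fun k _ => ?_
        rw [MeasureTheory.integral_const_mul]
    _ = ∫ s in Set.Ioi (0 : ℝ),
        ∑ k ∈ Finset.range K, (((k+1).factorial : ℝ))⁻¹ * (s ^ (k+1) * Real.exp (-s)) ∂ν := by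
        rw [integral_finset_sum _ (fun k _ => hint k)]
    _ ≤ ∫ s in Set.Ioi (0 : ℝ), min 1 s ∂ν := by
        refine setIntegral_mono_on (integrable_finset_sum _ (fun k _ => hint k)) hν
          measurableSet_Ioi fun s hs => ?_
        exact sum_pointwise_le K hs

lemma summable_J : Summable (fun k : ℕ =>
    (((k+1).factorial : ℝ))⁻¹ * ∫ s in Set.Ioi (0 : ℝ), s ^ (k+1) * Real.exp (-s) ∂ν) :=
  summable_of_sum_range_le (fun k => J_nonneg ν (k+1)) (sum_integral_le hν)

omit hν in
lemma bernC_succ_eq (b : ℝ) (k : ℕ) : bernC b ν (k+1)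
    = (((k+1).factorial : ℝ))⁻¹ * (∫ s in Set.Ioi (0 : ℝ), s ^ (k+1) * Real.exp (-s) ∂ν)
      + if k = 0 then b else 0 := by
  rw [bernC]
  congr 1
  simp [Nat.succ_eq_add_one]

omit hν in
lemma bernC_nonneg (b : ℝ) (hb : 0 ≤ b) (k : ℕ) : 0 ≤ bernC b ν k := by
  rw [bernC]
  have := J_nonneg ν k
  split <;> linarith

lemma summable_bernC_succ (b : ℝ) : Summable (fun k : ℕ => bernC b ν (k+1)) := by
  have : (fun k : ℕ => bernC b ν (k+1)) = (fun k : ℕ =>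
      (((k+1).factorial : ℝ))⁻¹ * ∫ s in Set.Ioi (0 : ℝ), s ^ (k+1) * Real.exp (-s) ∂ν)
      + (fun k : ℕ => if k = 0 then b else 0) := by
    funext k
    rw [Pi.add_apply, bernC_succ_eq b]
  rw [this]
  refine (summable_J hν).add ?_
  apply summable_of_ne_finset_zero (s := {(0:ℕ)})
  intro k hk
  simp only [Finset.mem_singleton] at hk
  simp [hk]



omit hν in
lemma summable_exp_div (w : ℂ) :
    Summable (fun k : ℕ => w ^ (k+1) / ((k+1).factorial : ℂ)) := by
  have h := NormedSpace.expSeries_div_summable w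
  exact (summable_nat_add_iff 1).2 h

omit hν in
lemma tsum_exp_div (w : ℂ) :
    ∑' k : ℕ, w ^ (k+1) / ((k+1).factorial : ℂ) = Complex.exp w - 1 := by
  have h : Summable (fun n : ℕ => w ^ n / (n.factorial : ℂ)) :=
    NormedSpace.expSeries_div_summable w
  have he : Complex.exp w = ∑' n : ℕ, w ^ n / (n.factorial : ℂ) := by
    rw [Complex.exp_eq_exp_ℂ, NormedSpace.exp_eq_tsum_div]
  rw [he, Summable.tsum_eq_zero_add h]
  simp

omit hν in
lemma norm_cexp_le {w : ℂ} (hw : 0 ≤ w.re) {s : ℝ} (hs : 0 < s) :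
    ‖Complex.exp (-(w * s))‖ ≤ 1 := by
  rw [Complex.norm_exp]
  have : (-(w * s)).re = -(w.re * s) := by simp [Complex.mul_re]
  rw [this]
  exact Real.exp_le_one_iff.2 (by nlinarith)

omit hν in
lemma norm_one_sub_cexp_le {w : ℂ} (hw : 0 ≤ w.re) {s : ℝ} (hs : 0 < s) :
    ‖1 - Complex.exp (-(w * s))‖ ≤ (2 + 2 * ‖w‖) * min 1 s := by
  have hnw : 0 ≤ ‖w‖ := norm_nonneg w
  have h2 : ‖1 - Complex.exp (-(w * s))‖ ≤ 2 := by
    calc ‖1 - Complex.exp (-(w * s))‖ ≤ ‖(1:ℂ)‖ + ‖Complex.exp (-(w * s))‖ := norm_sub_le _ _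
      _ ≤ 1 + 1 := by
          have := norm_cexp_le hw hs
          simp only [norm_one]
          linarith
      _ = 2 := by norm_num
  rcases le_or_gt 1 s with hs1 | hs1
  · rw [min_eq_left hs1]
    nlinarith
  · rw [min_eq_right hs1.le]
    have hws : ‖w * (s:ℂ)‖ = ‖w‖ * s := by
      rw [norm_mul, Complex.norm_real, Real.norm_of_nonneg hs.le]
    rcases le_or_gt (‖w * (s:ℂ)‖) 1 with hsm | hsm
    · have := Complex.norm_exp_sub_one_le (x := -(w * s)) (by rwa [norm_neg])
      have heq : ‖1 - Complex.exp (-(w * s))‖ = ‖Complex.exp (-(w * s)) - 1‖ := by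
        rw [norm_sub_rev]
      rw [heq]
      calc ‖Complex.exp (-(w * s)) - 1‖ ≤ 2 * ‖-(w * s)‖ := this
        _ = 2 * (‖w‖ * s) := by rw [norm_neg, hws]
        _ ≤ (2 + 2 * ‖w‖) * s := by nlinarith
    · have h1 : 1 ≤ ‖w‖ * s := by rw [hws] at hsm; linarith
      calc ‖1 - Complex.exp (-(w * s))‖ ≤ 2 := h2
        _ ≤ 2 * (‖w‖ * s) := by nlinarith
        _ ≤ (2 + 2 * ‖w‖) * s := by nlinarith

lemma integrable_one_sub_cexp {w : ℂ} (hw : 0 ≤ w.re) :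
    IntegrableOn (fun s : ℝ => 1 - Complex.exp (-(w * s))) (Set.Ioi (0 : ℝ)) ν := by
  refine Integrable.mono' (hν.const_mul (2 + 2 * ‖w‖)) ?_ ?_
  · exact (Continuous.aestronglyMeasurable (by continuity))
  · rw [MeasureTheory.ae_restrict_iff' measurableSet_Ioi]
    exact Filter.Eventually.of_forall fun s hs => norm_one_sub_cexp_le hw hs

lemma integrable_cexp_sub {w : ℂ} (hw : 0 ≤ w.re) :
    IntegrableOn (fun s : ℝ => Complex.exp (-(w * s)) - Complex.exp (-(s:ℂ)))
      (Set.Ioi (0 : ℝ)) ν := by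
  have h1 := integrable_one_sub_cexp hν (w := 1) (by norm_num)
  have h2 := integrable_one_sub_cexp hν hw
  have hfe : (fun s : ℝ => Complex.exp (-(w * s)) - Complex.exp (-(s:ℂ)))
      = ((fun s : ℝ => 1 - Complex.exp (-((1:ℂ) * s))) - fun s : ℝ => 1 - Complex.exp (-(w * s))) := by
    funext s
    simp only [Pi.sub_apply, one_mul]
    ring
  rw [IntegrableOn, hfe]
  exact h1.sub h2



lemma tsum_f_eq {z : ℂ} (hz : ‖z‖ ≤ 1) :
    ∑' k : ℕ, (((k+1).factorial : ℂ))⁻¹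
        * ((∫ s in Set.Ioi (0:ℝ), s ^ (k+1) * Real.exp (-s) ∂ν : ℝ) : ℂ) * z ^ (k+1)
      = ∫ s in Set.Ioi (0:ℝ),
          (Complex.exp (-((1 - z) * s)) - Complex.exp (-(s:ℂ))) ∂ν := by
  set F : ℕ → ℝ → ℂ := fun k s =>
    (((k+1).factorial : ℂ))⁻¹ * z ^ (k+1) * ((s ^ (k+1) * Real.exp (-s) : ℝ) : ℂ) with hF
  have hint : ∀ k : ℕ, Integrable (F k) (ν.restrict (Set.Ioi (0:ℝ))) := by
    intro k
    exact ((integrable_pow_exp hν (Nat.succ_le_succ (Nat.zero_le k))).ofReal).const_mul _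
  have hFk_int : ∀ k : ℕ, ∫ s in Set.Ioi (0:ℝ), F k s ∂ν
      = (((k+1).factorial : ℂ))⁻¹
        * ((∫ s in Set.Ioi (0:ℝ), s ^ (k+1) * Real.exp (-s) ∂ν : ℝ) : ℂ) * z ^ (k+1) := by
    intro k
    rw [hF]
    simp only []
    have hor : ∫ s in Set.Ioi (0:ℝ), ((s ^ (k+1) * Real.exp (-s) : ℝ) : ℂ) ∂ν
        = ((∫ s in Set.Ioi (0:ℝ), s ^ (k+1) * Real.exp (-s) ∂ν : ℝ) : ℂ) := integral_ofReal
    rw [MeasureTheory.integral_const_mul, hor]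
    ring
  have hnorm : ∀ k : ℕ, (∫ s in Set.Ioi (0:ℝ), ‖F k s‖ ∂ν)
      ≤ (((k+1).factorial : ℝ))⁻¹ * ∫ s in Set.Ioi (0:ℝ), s ^ (k+1) * Real.exp (-s) ∂ν := by
    intro k
    rw [← MeasureTheory.integral_const_mul]
    refine setIntegral_mono_on ((hint k).norm) 
      ((integrable_pow_exp hν (Nat.succ_le_succ (Nat.zero_le k))).const_mul _)
      measurableSet_Ioi fun s hs => ?_
    have hs' : (0:ℝ) < s := hs
    rw [hF]
    simp only []
    rw [norm_mul, norm_mul, Complex.norm_real, Real.norm_of_nonneg (by positivity),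
      norm_pow, norm_inv, Complex.norm_natCast]
    have h1 : ‖z‖ ^ (k+1) ≤ 1 := pow_le_one₀ (norm_nonneg z) hz
    have h2 : (0:ℝ) ≤ s ^ (k+1) * Real.exp (-s) := by positivity
    have h3 : (0:ℝ) ≤ (((k+1).factorial : ℝ))⁻¹ := by positivity
    calc (((k+1).factorial : ℝ))⁻¹ * ‖z‖ ^ (k+1) * (s ^ (k+1) * Real.exp (-s))
        ≤ (((k+1).factorial : ℝ))⁻¹ * 1 * (s ^ (k+1) * Real.exp (-s)) := by
          refine mul_le_mul_of_nonneg_right ?_ h2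
          exact mul_le_mul_of_nonneg_left h1 h3
      _ = (((k+1).factorial : ℝ))⁻¹ * (s ^ (k+1) * Real.exp (-s)) := by ring
  have hsum : Summable fun k : ℕ => ∫ s in Set.Ioi (0:ℝ), ‖F k s‖ ∂ν := by
    refine Summable.of_nonneg_of_le (fun k => ?_) hnorm (summable_J hν)
    exact integral_nonneg (fun s => norm_nonneg _)
  have hswap := MeasureTheory.integral_tsum_of_summable_integral_norm hint hsum
  have hptw : ∀ s : ℝ, (∑' k : ℕ, F k s)
      = Complex.exp (-((1 - z) * s)) - Complex.exp (-(s:ℂ)) := by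
    intro s
    have step : ∀ k : ℕ, F k s = ((z * s) ^ (k+1) / (((k+1).factorial : ℂ))) 
        * Complex.exp (-(s:ℂ)) := by
      intro k
      rw [hF]
      simp only []
      rw [Complex.ofReal_mul, Complex.ofReal_pow, ← Complex.ofReal_neg, Complex.ofReal_exp]
      rw [mul_pow]
      push_cast
      ring
    calc (∑' k : ℕ, F k s)
        = ∑' k : ℕ, ((z * s) ^ (k+1) / (((k+1).factorial : ℂ))) * Complex.exp (-(s:ℂ)) :=
          tsum_congr step
      _ = (∑' k : ℕ, (z * s) ^ (k+1) / (((k+1).factorial : ℂ))) * Complex.exp (-(s:ℂ)) :=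
          tsum_mul_right
      _ = (Complex.exp (z * s) - 1) * Complex.exp (-(s:ℂ)) := by rw [tsum_exp_div]
      _ = Complex.exp (-((1 - z) * s)) - Complex.exp (-(s:ℂ)) := by
          rw [sub_mul, one_mul, ← Complex.exp_add]
          ring_nf
  calc ∑' k : ℕ, (((k+1).factorial : ℂ))⁻¹
        * ((∫ s in Set.Ioi (0:ℝ), s ^ (k+1) * Real.exp (-s) ∂ν : ℝ) : ℂ) * z ^ (k+1)
      = ∑' k : ℕ, ∫ s in Set.Ioi (0:ℝ), F k s ∂ν := by
        exact tsum_congr fun k => (hFk_int k).symm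
    _ = ∫ s in Set.Ioi (0:ℝ), (∑' k : ℕ, F k s) ∂ν := hswap
    _ = ∫ s in Set.Ioi (0:ℝ),
          (Complex.exp (-((1 - z) * s)) - Complex.exp (-(s:ℂ))) ∂ν := by
        exact integral_congr_ae (Filter.Eventually.of_forall fun s => hptw s)

lemma tsum_bernC_pow (b : ℝ) (hb : 0 ≤ b) {z : ℂ} (hz : ‖z‖ ≤ 1) :
    ∑' k : ℕ, ((bernC b ν (k+1) : ℝ) : ℂ) * z ^ (k+1)
      = b * z + ∫ s in Set.Ioi (0:ℝ),
          (Complex.exp (-((1 - z) * s)) - Complex.exp (-(s:ℂ))) ∂ν := by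
  set f : ℕ → ℂ := fun k => (((k+1).factorial : ℂ))⁻¹
    * ((∫ s in Set.Ioi (0:ℝ), s ^ (k+1) * Real.exp (-s) ∂ν : ℝ) : ℂ) * z ^ (k+1) with hfdef
  set g : ℕ → ℂ := fun k => (if k = 0 then (b:ℂ) else 0) * z ^ (k+1) with hgdef
  have hsummand : ∀ k : ℕ, ((bernC b ν (k+1) : ℝ) : ℂ) * z ^ (k+1) = f k + g k := by
    intro k
    rw [bernC_succ_eq b k, hfdef, hgdef]
    simp only []
    push_cast [apply_ite (fun r : ℝ => (r : ℂ))]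
    ring
  have hf : Summable f := by
    refine Summable.of_norm_bounded (summable_J hν) fun k => ?_
    rw [hfdef]
    simp only []
    rw [norm_mul, norm_mul, norm_inv, Complex.norm_natCast, Complex.norm_real, norm_pow]
    have h1 : ‖z‖ ^ (k+1) ≤ 1 := pow_le_one₀ (norm_nonneg z) hz
    have h2 : ‖(∫ s in Set.Ioi (0:ℝ), s ^ (k+1) * Real.exp (-s) ∂ν : ℝ)‖
        = ∫ s in Set.Ioi (0:ℝ), s ^ (k+1) * Real.exp (-s) ∂ν := by
      refine Real.norm_of_nonneg ?_
      refine setIntegral_nonneg measurableSet_Ioi fun s hs => ?_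
      have : (0:ℝ) < s := hs
      positivity
    rw [h2]
    have h3 := J_nonneg ν (k+1)
    have h4 : (0:ℝ) ≤ (((k+1).factorial : ℝ))⁻¹ := by positivity
    have h5 : (0:ℝ) ≤ ∫ s in Set.Ioi (0:ℝ), s ^ (k+1) * Real.exp (-s) ∂ν := by
      refine setIntegral_nonneg measurableSet_Ioi fun s hs => ?_
      have : (0:ℝ) < s := hs
      positivity
    calc (((k+1).factorial : ℝ))⁻¹ * (∫ s in Set.Ioi (0:ℝ), s ^ (k+1) * Real.exp (-s) ∂ν)
          * ‖z‖ ^ (k+1)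
        ≤ (((k+1).factorial : ℝ))⁻¹ * (∫ s in Set.Ioi (0:ℝ), s ^ (k+1) * Real.exp (-s) ∂ν)
          * 1 := by
          refine mul_le_mul_of_nonneg_left h1 (by positivity)
      _ = (((k+1).factorial : ℝ))⁻¹ * ∫ s in Set.Ioi (0:ℝ), s ^ (k+1) * Real.exp (-s) ∂ν := by
          ring
  have hg : Summable g := by
    apply summable_of_ne_finset_zero (s := {(0:ℕ)})
    intro k hk
    simp only [Finset.mem_singleton] at hk
    rw [hgdef]
    simp [hk]
  calc ∑' k : ℕ, ((bernC b ν (k+1) : ℝ) : ℂ) * z ^ (k+1)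
      = ∑' k : ℕ, (f k + g k) := tsum_congr hsummand
    _ = (∑' k, f k) + ∑' k, g k := Summable.tsum_add hf hg
    _ = (∫ s in Set.Ioi (0:ℝ),
          (Complex.exp (-((1 - z) * s)) - Complex.exp (-(s:ℂ))) ∂ν) + b * z := by
        rw [tsum_f_eq hν hz]
        congr 1
        rw [tsum_eq_single 0]
        · rw [hgdef]; simp
        · intro k hk
          rw [hgdef]
          simp [hk]
    _ = b * z + ∫ s in Set.Ioi (0:ℝ),
          (Complex.exp (-((1 - z) * s)) - Complex.exp (-(s:ℂ))) ∂ν := by ring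


def F2aux {d : ℕ} (p : (Fin d → ℤ) → ℝ) (c : ℕ → ℝ) (ξ : Fin d → ℝ) :
    (Fin d → ℤ) × ℕ → ℂ := fun xk =>
  ((convPow p (xk.2+1) xk.1 * c (xk.2+1) : ℝ) : ℂ) * eterm ξ xk.1

omit hν in
lemma F2aux_apply {d : ℕ} (p : (Fin d → ℤ) → ℝ) (c : ℕ → ℝ) (ξ : Fin d → ℝ)
    (x : Fin d → ℤ) (k : ℕ) :
    F2aux p c ξ (x, k) = ((convPow p (k+1) x * c (k+1) : ℝ) : ℂ) * eterm ξ x := rfl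

omit hν in
lemma charFn_subStep {d : ℕ} {p : (Fin d → ℤ) → ℝ}
    (hp0 : ∀ x, 0 ≤ p x) (hpsum : Summable p) (hp1 : ∑' x : Fin d → ℤ, p x = 1)
    (c : ℕ → ℝ) (hc0 : ∀ k, 0 ≤ c k) (hcsum : Summable (fun k : ℕ => c (k+1)))
    (ξ : Fin d → ℝ) :
    charFn (subStep p c) ξ = ∑' k : ℕ, ((c (k+1) : ℝ) : ℂ) * (charFn p ξ) ^ (k+1) := by
  have hnormF2 : ∀ xk : (Fin d → ℤ) × ℕ,
      ‖F2aux p c ξ xk‖ = convPow p (xk.2+1) xk.1 * c (xk.2+1) := by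
    intro xk
    rw [F2aux]
    rw [norm_mul, norm_eterm, mul_one, Complex.norm_real, Real.norm_of_nonneg
      (mul_nonneg (convPow_nonneg hp0 _ _) (hc0 _))]
  have hG2 : Summable (fun kx : ℕ × (Fin d → ℤ) =>
      convPow p (kx.1+1) kx.2 * c (kx.1+1)) := by
    have hf : (0 : (ℕ × (Fin d → ℤ)) → ℝ) ≤ (fun kx : ℕ × (Fin d → ℤ) =>
        convPow p (kx.1+1) kx.2 * c (kx.1+1)) :=
      fun kx => mul_nonneg (convPow_nonneg hp0 _ _) (hc0 _)
    have h1 : ∀ k : ℕ, Summable (fun x : Fin d → ℤ => convPow p (k+1) x * c (k+1)) :=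
      fun k => (convPow_summable hp0 hpsum (k+1)).mul_right _
    have h2 : Summable fun k : ℕ => ∑' x : Fin d → ℤ, convPow p (k+1) x * c (k+1) := by
      have he : (fun k : ℕ => ∑' x, convPow p (k+1) x * c (k+1)) = fun k : ℕ => c (k+1) := by
        funext k
        rw [tsum_mul_right, tsum_convPow hp0 hpsum hp1 (k+1), one_mul]
      rw [he]
      exact hcsum
    exact (summable_prod_of_nonneg hf).2 ⟨h1, h2⟩
  have hF2 : Summable (F2aux p c ξ) := by
    apply Summable.of_norm
    have : (fun xk : (Fin d → ℤ) × ℕ => ‖F2aux p c ξ xk‖) = fun xk : (Fin d → ℤ) × ℕ =>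
        convPow p (xk.2+1) xk.1 * c (xk.2+1) := funext hnormF2
    rw [this, ← (Equiv.prodComm ℕ (Fin d → ℤ)).summable_iff]
    exact hG2
  have hinner : ∀ x : Fin d → ℤ, ((subStep p c x : ℝ) : ℂ) * eterm ξ x
      = ∑' k : ℕ, F2aux p c ξ (x, k) := by
    intro x
    rw [subStep, Complex.ofReal_tsum, ← tsum_mul_right]
    rfl
  calc charFn (subStep p c) ξ = ∑' x, ((subStep p c x : ℝ) : ℂ) * eterm ξ x := charFn_eq _ _
    _ = ∑' x, ∑' k : ℕ, F2aux p c ξ (x, k) := tsum_congr hinner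
    _ = ∑' xk : (Fin d → ℤ) × ℕ, F2aux p c ξ xk :=
        (Summable.tsum_prod' hF2 (fun x => hF2.prod_factor x)).symm
    _ = ∑' kx : ℕ × (Fin d → ℤ), F2aux p c ξ ((Equiv.prodComm ℕ (Fin d → ℤ)) kx) :=
        ((Equiv.prodComm ℕ (Fin d → ℤ)).tsum_eq (F2aux p c ξ)).symm
    _ = ∑' k : ℕ, ∑' x, F2aux p c ξ (x, k) := by
        have hs : Summable ((F2aux p c ξ) ∘ (Equiv.prodComm ℕ (Fin d → ℤ))) :=
          ((Equiv.prodComm ℕ (Fin d → ℤ)).summable_iff).2 hF2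
        exact Summable.tsum_prod' hs (fun k => hs.prod_factor k)
    _ = ∑' k : ℕ, ((c (k+1) : ℝ) : ℂ) * (charFn p ξ) ^ (k+1) := by
        refine tsum_congr fun k => ?_
        have hterm : ∀ x : Fin d → ℤ, F2aux p c ξ (x, k)
            = ((c (k+1) : ℝ) : ℂ) * (((convPow p (k+1) x : ℝ) : ℂ) * eterm ξ x) := by
          intro x
          rw [F2aux_apply]
          push_cast
          ring
        rw [tsum_congr hterm, tsum_mul_left, ← charFn_eq, charFn_convPow hp0 hpsum (k+1)]

end SubWalkAux




open SubWalkAux in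
/-- Lemma 4.4: `Φ_ψ(ξ) = 1 - ψ(1 - Φ(ξ))` for all `ξ ∈ ℝ^d`, where on the right-hand side
`ψ` denotes its holomorphic extension to the closed right half-plane. -/
theorem charFn_of_subordinate_walk
    (α : ℝ) (hα0 : 0 < α) (hα2 : α < 2)
    (b : ℝ) (hb : 0 ≤ b) (ν : Measure ℝ)
    (hνfin : IntegrableOn (fun s => min 1 s) (Set.Ioi (0 : ℝ)) ν)
    (ψ : ℝ → ℝ)
    (hψ : ∀ x : ℝ, 0 ≤ x →
      ψ x = b * x + ∫ s in Set.Ioi (0 : ℝ), (1 - Real.exp (-(x * s))) ∂ν)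
    (hψ0 : ψ 0 = 0) (hψ1 : ψ 1 = 1)
    (d : ℕ) (hd : 1 ≤ d) (p : (Fin d → ℤ) → ℝ)
    (hp0 : ∀ x, 0 ≤ p x) (hp1 : ∑' x : Fin d → ℤ, p x = 1)
    (ξ : Fin d → ℝ) :
    charFn (subStep p (bernC b ν)) ξ = 1 - psiC b ν (1 - charFn p ξ) := by
  classical
  have hpsum : Summable p := by
    by_contra h
    rw [tsum_eq_zero_of_not_summable h] at hp1
    norm_num at hp1
  have hz : ‖charFn p ξ‖ ≤ 1 := norm_charFn_le hp0 hpsum hp1 ξ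
  have stepB := charFn_subStep hp0 hpsum hp1 (bernC b ν)
    (fun k => bernC_nonneg b hb k) (summable_bernC_succ hνfin b) ξ
  have stepC := tsum_bernC_pow hνfin b hb hz
  have hw : 0 ≤ (1 - charFn p ξ).re := by
    have h1 : (charFn p ξ).re ≤ ‖charFn p ξ‖ := Complex.re_le_norm _
    have h2 : (charFn p ξ).re ≤ 1 := le_trans h1 hz
    simp only [Complex.sub_re, Complex.one_re]
    linarith
  have hψ1' : ∫ s in Set.Ioi (0:ℝ), (1 - Real.exp (-s)) ∂ν = 1 - b := by
    have h := hψ 1 zero_le_one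
    rw [hψ1] at h
    have he : (fun s : ℝ => 1 - Real.exp (-(1 * s))) = fun s : ℝ => 1 - Real.exp (-s) := by
      funext s; rw [one_mul]
    rw [he] at h
    linarith
  have hA : ∫ s in Set.Ioi (0:ℝ), (1 - Complex.exp (-(s:ℂ))) ∂ν = ((1 - b : ℝ) : ℂ) := by
    have hptw : ∀ s : ℝ, (1 - Complex.exp (-(s:ℂ))) = ((1 - Real.exp (-s) : ℝ) : ℂ) := by
      intro s
      rw [Complex.ofReal_sub, Complex.ofReal_one, ← Complex.ofReal_neg, Complex.ofReal_exp]
    rw [integral_congr_ae (Filter.Eventually.of_forall fun s => hptw s)]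
    have h2 : ∫ s in Set.Ioi (0:ℝ), ((1 - Real.exp (-s) : ℝ) : ℂ) ∂ν
        = ((∫ s in Set.Ioi (0:ℝ), (1 - Real.exp (-s)) ∂ν : ℝ) : ℂ) := integral_ofReal
    rw [h2, hψ1']
  have intA : IntegrableOn (fun s : ℝ => 1 - Complex.exp (-(s:ℂ))) (Set.Ioi (0:ℝ)) ν := by
    have h := integrable_one_sub_cexp hνfin (w := 1) (by norm_num)
    have he : (fun s : ℝ => 1 - Complex.exp (-((1:ℂ) * s)))
        = fun s : ℝ => 1 - Complex.exp (-(s:ℂ)) := by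
      funext s; rw [one_mul]
    rwa [he] at h
  have intB : IntegrableOn (fun s : ℝ => 1 - Complex.exp (-((1 - charFn p ξ) * s)))
      (Set.Ioi (0:ℝ)) ν := integrable_one_sub_cexp hνfin hw
  have hsplit : ∫ s in Set.Ioi (0:ℝ),
      (Complex.exp (-((1 - charFn p ξ) * s)) - Complex.exp (-(s:ℂ))) ∂ν
      = (∫ s in Set.Ioi (0:ℝ), (1 - Complex.exp (-(s:ℂ))) ∂ν)
        - ∫ s in Set.Ioi (0:ℝ), (1 - Complex.exp (-((1 - charFn p ξ) * s))) ∂ν := by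
    rw [← integral_sub intA intB]
    refine integral_congr_ae (Filter.Eventually.of_forall fun s => ?_)
    ring
  rw [stepB, stepC, hsplit, hA, psiC]
  push_cast
  ring
end
end

section
/- Under the stated assumptions, for every z ∈ ℂ with |z| ≤ 1 one has 1 − ψ(1 − z) = Σ_{k≥1} c(ψ,k) z^k, where ψ denotes the holomorphic extension of ψ to the closed right half-plane, and the series converges absolutely. -/
open MeasureTheory Filter Topology

noncomputable section

lemma bern_L1 {s : ℝ} : 1 - Real.exp (-s) ≤ min 1 s := by
  have h0 := Real.exp_pos (-s)
  refine le_min (by linarith) ?_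
  have := Real.add_one_le_exp (-s)
  linarith

lemma bern_L2 (k : ℕ) {s : ℝ} (hs : 0 < s) :
    s ^ (k + 1) * Real.exp (-s) ≤ ((k + 1).factorial : ℝ) * min 1 s := by
  rcases le_or_gt s 1 with h | h
  · rw [min_eq_right h]
    have h1 : s ^ (k + 1) * Real.exp (-s) ≤ s ^ (k + 1) := by
      nlinarith [Real.exp_le_one_iff.mpr (neg_nonpos.mpr hs.le), Real.exp_pos (-s),
        pow_pos hs (k+1)]
    have h2 : s ^ (k + 1) ≤ s := by
      calc s ^ (k + 1) ≤ s ^ 1 := pow_le_pow_of_le_one hs.le h (by omega)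
      _ = s := pow_one s
    have h3 : (1 : ℝ) ≤ ((k + 1).factorial : ℝ) := by
      exact_mod_cast Nat.one_le_iff_ne_zero.mpr (k+1).factorial_ne_zero
    nlinarith
  · rw [min_eq_left h.le]
    have h1 : s ^ (k + 1) / ((k + 1).factorial : ℝ) ≤ Real.exp s := by
      calc s ^ (k + 1) / ((k + 1).factorial : ℝ)
          ≤ ∑ i ∈ Finset.range (k + 2), s ^ i / (i.factorial : ℝ) := by
            exact Finset.single_le_sum (f := fun i => s ^ i / (i.factorial : ℝ))
              (fun i _ => by positivity)
              (show k+1 ∈ Finset.range (k+2) from Finset.mem_range.mpr (by omega))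
        _ ≤ Real.exp s := Real.sum_le_exp_of_nonneg hs.le _
    have hf : (0:ℝ) < ((k + 1).factorial : ℝ) := by positivity
    have he := Real.exp_pos s
    rw [Real.exp_neg, div_le_iff₀ hf] at *
    rw [mul_inv_le_iff₀ he]
    linarith [h1]

lemma bern_L3 (n : ℕ) {s : ℝ} (hs : 0 < s) :
    ∑ k ∈ Finset.range n, (((k + 1).factorial : ℝ))⁻¹ * (s ^ (k + 1) * Real.exp (-s))
      ≤ min 1 s := by
  have h1 : ∑ k ∈ Finset.range n, (((k + 1).factorial : ℝ))⁻¹ * s ^ (k + 1)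
      ≤ Real.exp s - 1 := by
    have hsum := Real.sum_le_exp_of_nonneg hs.le (n + 1)
    rw [Finset.sum_range_succ'] at hsum
    simp only [pow_zero, Nat.factorial_zero, Nat.cast_one, div_one] at hsum
    have : ∑ k ∈ Finset.range n, (((k + 1).factorial : ℝ))⁻¹ * s ^ (k + 1)
        = ∑ k ∈ Finset.range n, s ^ (k + 1) / ((k + 1).factorial : ℝ) := by
      exact Finset.sum_congr rfl fun k _ => by rw [div_eq_inv_mul]
    linarith [this.le, this.ge]
  have h2 : ∑ k ∈ Finset.range n, (((k + 1).factorial : ℝ))⁻¹ * (s ^ (k + 1) * Real.exp (-s))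
      = (∑ k ∈ Finset.range n, (((k + 1).factorial : ℝ))⁻¹ * s ^ (k + 1)) * Real.exp (-s) := by
    rw [Finset.sum_mul]; exact Finset.sum_congr rfl fun k _ => by ring
  rw [h2]
  have he := Real.exp_pos (-s)
  calc (∑ k ∈ Finset.range n, (((k + 1).factorial : ℝ))⁻¹ * s ^ (k + 1)) * Real.exp (-s)
      ≤ (Real.exp s - 1) * Real.exp (-s) := mul_le_mul_of_nonneg_right h1 he.le
    _ = 1 - Real.exp (-s) := by rw [sub_mul, ← Real.exp_add]; simp
    _ ≤ min 1 s := bern_L1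

lemma bern_expm1_hasSum (w : ℂ) :
    HasSum (fun k : ℕ => w ^ (k + 1) / (((k + 1).factorial : ℕ) : ℂ)) (Complex.exp w - 1) := by
  have h : HasSum (fun n : ℕ => w ^ n / ((n.factorial : ℕ) : ℂ)) (Complex.exp w) := by
    rw [Complex.exp_eq_exp_ℂ]
    exact NormedSpace.expSeries_div_hasSum_exp w
  have := (hasSum_nat_add_iff' (f := fun n : ℕ => w ^ n / ((n.factorial : ℕ) : ℂ)) 1).2 h
  simpa using this

/-- The power-series identity `1 - ψ(1 - z) = Σ_{k ≥ 1} c(ψ,k) z^k` for `|z| ≤ 1`,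
with absolute convergence of the series. -/
theorem one_sub_psi_power_series
    (α : ℝ) (hα0 : 0 < α) (hα2 : α < 2)
    (b : ℝ) (hb : 0 ≤ b) (ν : Measure ℝ)
    (hνfin : IntegrableOn (fun s => min 1 s) (Set.Ioi (0 : ℝ)) ν)
    (ψ : ℝ → ℝ)
    (hψ : ∀ x : ℝ, 0 ≤ x →
      ψ x = b * x + ∫ s in Set.Ioi (0 : ℝ), (1 - Real.exp (-(x * s))) ∂ν)
    (hψ0 : ψ 0 = 0) (hψ1 : ψ 1 = 1)
    (z : ℂ) (hz : ‖z‖ ≤ 1) :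
    HasSum (fun k : ℕ => (bernC b ν (k + 1) : ℂ) * z ^ (k + 1))
        (1 - psiC b ν (1 - z)) ∧
      Summable (fun k : ℕ => ‖(bernC b ν (k + 1) : ℂ) * z ^ (k + 1)‖) := by
  -- integrability of s^(k+1) e^{-s}
  have Ik : ∀ k : ℕ, IntegrableOn (fun s => s ^ (k+1) * Real.exp (-s)) (Set.Ioi (0:ℝ)) ν := by
    intro k
    refine Integrable.mono (hνfin.const_mul ((k+1).factorial : ℝ)) ?_ ?_
    · exact (continuous_pow (k+1) |>.mul
        (Real.continuous_exp.comp continuous_neg)).aestronglyMeasurable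
    · rw [ae_restrict_iff' measurableSet_Ioi]
      refine ae_of_all _ fun s hs => ?_
      have hs' : (0:ℝ) < s := hs
      have hmin : (0:ℝ) ≤ min 1 s := le_min zero_le_one hs'.le
      rw [Real.norm_of_nonneg (by positivity), Real.norm_of_nonneg (by positivity)]
      exact bern_L2 k hs'
  set A : ℕ → ℝ := fun k => ∫ s in Set.Ioi (0:ℝ), s ^ (k+1) * Real.exp (-s) ∂ν with hA_def
  set a : ℕ → ℝ := fun k => (((k+1).factorial : ℝ))⁻¹ * A k with ha_def
  have ha_nonneg : ∀ k, 0 ≤ a k := by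
    intro k
    refine mul_nonneg (by positivity) (setIntegral_nonneg measurableSet_Ioi fun s hs => ?_)
    have : (0:ℝ) < s := hs
    positivity
  have ha_sum : Summable a := by
    refine summable_of_sum_range_le (c := ∫ s in Set.Ioi (0:ℝ), min 1 s ∂ν) ha_nonneg fun n => ?_
    have h1 : ∑ k ∈ Finset.range n, a k
        = ∫ s in Set.Ioi (0:ℝ),
            ∑ k ∈ Finset.range n, (((k+1).factorial : ℝ))⁻¹ * (s ^ (k+1) * Real.exp (-s)) ∂ν := by
      rw [integral_finset_sum _ fun k _ => (Ik k).const_mul _]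
      exact Finset.sum_congr rfl fun k _ => by rw [ha_def]; simp [integral_const_mul, hA_def]
    rw [h1]
    exact setIntegral_mono_on
      (integrable_finset_sum _ fun k _ => (Ik k).const_mul _) hνfin measurableSet_Ioi
      fun s hs => bern_L3 n hs
  -- the complex summands
  set F : ℕ → ℝ → ℂ :=
    fun k s => (z * s) ^ (k+1) / (((k+1).factorial : ℕ) : ℂ) * (Real.exp (-s) : ℂ) with hF_def
  have hFnorm : ∀ k : ℕ, ∀ s : ℝ, 0 < s →
      ‖F k s‖ ≤ (((k+1).factorial : ℝ))⁻¹ * (s ^ (k+1) * Real.exp (-s)) := by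
    intro k s hs
    rw [hF_def]
    simp only [norm_mul, norm_div, norm_pow,
      Complex.norm_natCast]
    rw [Complex.norm_of_nonneg hs.le, Complex.norm_of_nonneg (Real.exp_pos _).le]
    have hz' : ‖z‖ ≤ 1 := hz
    have h2 : (‖z‖ * s) ^ (k+1) ≤ s ^ (k+1) := by
      apply pow_le_pow_left₀ (by positivity)
      nlinarith [hs.le, (norm_nonneg z)]
    have hf : (0:ℝ) < ((k+1).factorial : ℝ) := by positivity
    rw [div_eq_inv_mul]
    have he := Real.exp_pos (-s)
    calc (((k+1).factorial:ℝ))⁻¹ * (‖z‖ * s)^(k+1) * Real.exp (-s)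
        ≤ (((k+1).factorial:ℝ))⁻¹ * s^(k+1) * Real.exp (-s) := by gcongr
      _ = (((k+1).factorial:ℝ))⁻¹ * (s^(k+1) * Real.exp (-s)) := by ring
  have IF : ∀ k : ℕ, IntegrableOn (F k) (Set.Ioi (0:ℝ)) ν := by
    intro k
    refine Integrable.mono ((Ik k).const_mul (((k+1).factorial : ℝ))⁻¹) ?_ ?_
    · apply Continuous.aestronglyMeasurable
      rw [hF_def]
      fun_prop
    · rw [ae_restrict_iff' measurableSet_Ioi]
      refine ae_of_all _ fun s hs => ?_
      have hs' : (0:ℝ) < s := hs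
      have hmin : (0:ℝ) ≤ min 1 s := le_min zero_le_one hs'.le
      rw [Real.norm_of_nonneg (by positivity)]
      exact hFnorm k s hs'
  -- summability of integral norms
  have hFnormsum : Summable (fun k => ∫ s in Set.Ioi (0:ℝ), ‖F k s‖ ∂ν) := by
    refine Summable.of_nonneg_of_le
      (fun k => integral_nonneg fun s => norm_nonneg _) (fun k => ?_) ha_sum
    have : ∫ s in Set.Ioi (0:ℝ), ‖F k s‖ ∂ν
        ≤ ∫ s in Set.Ioi (0:ℝ), (((k+1).factorial : ℝ))⁻¹ * (s^(k+1) * Real.exp (-s)) ∂ν :=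
      setIntegral_mono_on (IF k).norm ((Ik k).const_mul _) measurableSet_Ioi
        fun s hs => hFnorm k s hs
    calc ∫ s in Set.Ioi (0:ℝ), ‖F k s‖ ∂ν
        ≤ ∫ s in Set.Ioi (0:ℝ), (((k+1).factorial : ℝ))⁻¹ * (s^(k+1) * Real.exp (-s)) ∂ν := this
      _ = a k := by rw [ha_def]; simp [integral_const_mul, hA_def]
  -- the key swap
  have hswap : HasSum (fun k => ∫ s in Set.Ioi (0:ℝ), F k s ∂ν)
      (∫ s in Set.Ioi (0:ℝ), ∑' k, F k s ∂ν) :=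
    hasSum_integral_of_summable_integral_norm IF hFnormsum
  -- pointwise tsum
  have htsum : (fun s : ℝ => ∑' k, F k s)
      = fun s : ℝ => (Complex.exp (z * s) - 1) * (Real.exp (-s) : ℂ) := by
    funext s
    exact ((bern_expm1_hasSum (z * s)).mul_right ((Real.exp (-s) : ℝ) : ℂ)).tsum_eq
  rw [htsum] at hswap
  -- integrability of real 1 - e^{-s}
  have Ig1 : IntegrableOn (fun s : ℝ => 1 - Real.exp (-s)) (Set.Ioi (0:ℝ)) ν := by
    refine Integrable.mono hνfin ?_ ?_
    · exact (continuous_const.sub (Real.continuous_exp.comp continuous_neg)).aestronglyMeasurable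
    · rw [ae_restrict_iff' measurableSet_Ioi]
      refine ae_of_all _ fun s hs => ?_
      have hs' : (0:ℝ) < s := hs
      have h0 := Real.exp_pos (-s)
      have h1 : Real.exp (-s) ≤ 1 := Real.exp_le_one_iff.mpr (by linarith)
      rw [Real.norm_of_nonneg (by linarith), Real.norm_of_nonneg (le_min zero_le_one hs'.le)]
      exact bern_L1
  -- integrability of the psiC integrand at 1 - z
  have IG : IntegrableOn (fun s : ℝ => 1 - Complex.exp (-((1 - z) * s))) (Set.Ioi (0:ℝ)) ν := by
    refine Integrable.mono (hνfin.const_mul 4) ?_ ?_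
    · apply Continuous.aestronglyMeasurable
      fun_prop
    · rw [ae_restrict_iff' measurableSet_Ioi]
      refine ae_of_all _ fun s hs => ?_
      have hs' : (0:ℝ) < s := hs
      have hmin : (0:ℝ) ≤ min 1 s := le_min zero_le_one hs'.le
      rw [Real.norm_of_nonneg (by positivity)]
      have hw : ‖1 - z‖ ≤ 2 := by
        calc ‖1 - z‖ ≤ ‖(1:ℂ)‖ + ‖z‖ := by
              exact norm_sub_le _ _
          _ ≤ 2 := by
            rw [norm_one]
            have : ‖z‖ ≤ 1 := hz
            linarith
      rcases le_or_gt s (1/2) with h | h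
      · have hxs : ‖(-((1 - z) * s))‖ ≤ 1 := by
          rw [norm_neg, norm_mul, Complex.norm_of_nonneg hs'.le]
          nlinarith [norm_nonneg (1 - z)]
        have := Complex.norm_exp_sub_one_le hxs
        rw [norm_neg, norm_mul, Complex.norm_of_nonneg hs'.le] at this
        have hmin' : min 1 s = s := min_eq_right (by linarith)
        calc ‖1 - Complex.exp (-((1 - z) * s))‖
            = ‖Complex.exp (-((1 - z) * s)) - 1‖ := by
              rw [norm_sub_rev]
          _ ≤ 2 * (‖1 - z‖ * s) := this
          _ ≤ 4 * min 1 s := by rw [hmin']; nlinarith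
      · have hre : 0 ≤ (1 - z).re := by
          have h1 : z.re ≤ ‖z‖ := Complex.re_le_norm z
          have : ‖z‖ ≤ 1 := hz
          simp only [Complex.sub_re, Complex.one_re]
          linarith
        have hne : ‖Complex.exp (-((1 - z) * s))‖ ≤ 1 := by
          rw [Complex.norm_exp]
          apply Real.exp_le_one_iff.mpr
          have : (-((1 - z) * s)).re = -((1 - z).re * s) := by
            simp [Complex.mul_re, Complex.ofReal_re, Complex.ofReal_im]
          rw [this]
          have : 0 ≤ (1 - z).re * s := mul_nonneg hre hs'.le
          linarith
        have hmin' : (1:ℝ)/2 ≤ min 1 s := le_min (by norm_num) (by linarith)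
        calc ‖1 - Complex.exp (-((1 - z) * s))‖
            ≤ ‖(1:ℂ)‖ + ‖Complex.exp (-((1 - z) * s))‖ := norm_sub_le _ _
          _ ≤ 1 + 1 := by
              rw [norm_one]
              gcongr
          _ ≤ 4 * min 1 s := by linarith
  -- pointwise decomposition
  have hG_eq : ∀ s : ℝ, ((1 - Real.exp (-s) : ℝ) : ℂ)
      - (Complex.exp (z * s) - 1) * ((Real.exp (-s) : ℝ) : ℂ)
      = 1 - Complex.exp (-((1 - z) * s)) := by
    intro s
    have h1 : Complex.exp (-((1 - z) * s)) = Complex.exp (z * s) * Complex.exp (-(s:ℂ)) := by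
      rw [← Complex.exp_add]
      congr 1
      ring
    rw [h1]
    push_cast [Complex.ofReal_exp]
    ring
  -- integrability of h
  have Ih : IntegrableOn (fun s : ℝ => (Complex.exp (z * s) - 1) * ((Real.exp (-s) : ℝ) : ℂ))
      (Set.Ioi (0:ℝ)) ν := by
    have : (fun s : ℝ => (Complex.exp (z * s) - 1) * ((Real.exp (-s) : ℝ) : ℂ))
        = fun s => ((1 - Real.exp (-s) : ℝ) : ℂ) - (1 - Complex.exp (-((1 - z) * s))) := by
      funext s
      rw [← hG_eq s]
      ring
    rw [this]
    exact (Ig1.ofReal).sub IG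
  -- integral of G
  have hGint : ∫ s in Set.Ioi (0:ℝ), (1 - Complex.exp (-((1 - z) * s))) ∂ν
      = ((∫ s in Set.Ioi (0:ℝ), (1 - Real.exp (-s)) ∂ν : ℝ) : ℂ)
        - ∫ s in Set.Ioi (0:ℝ), (Complex.exp (z * s) - 1) * ((Real.exp (-s) : ℝ) : ℂ) ∂ν := by
    calc ∫ s in Set.Ioi (0:ℝ), (1 - Complex.exp (-((1 - z) * s))) ∂ν
        = ∫ s in Set.Ioi (0:ℝ), (((1 - Real.exp (-s) : ℝ) : ℂ)
            - (Complex.exp (z * s) - 1) * ((Real.exp (-s) : ℝ) : ℂ)) ∂ν := by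
          apply setIntegral_congr_ae measurableSet_Ioi
          exact ae_of_all _ fun s _ => (hG_eq s).symm
      _ = (∫ s in Set.Ioi (0:ℝ), ((1 - Real.exp (-s) : ℝ) : ℂ) ∂ν)
            - ∫ s in Set.Ioi (0:ℝ), (Complex.exp (z * s) - 1) * ((Real.exp (-s) : ℝ) : ℂ) ∂ν :=
          integral_sub (Ig1.ofReal) Ih
      _ = ((∫ s in Set.Ioi (0:ℝ), (1 - Real.exp (-s)) ∂ν : ℝ) : ℂ)
            - ∫ s in Set.Ioi (0:ℝ), (Complex.exp (z * s) - 1) * ((Real.exp (-s) : ℝ) : ℂ) ∂ν := by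
          congr 1
          exact integral_ofReal
  -- value of ∫ g1
  have hg1val : ∫ s in Set.Ioi (0:ℝ), (1 - Real.exp (-s)) ∂ν = 1 - b := by
    have h1 := hψ 1 zero_le_one
    simp only [one_mul, mul_one] at h1
    rw [hψ1] at h1
    linarith
  -- final value identity
  have hval : 1 - psiC b ν (1 - z)
      = (∫ s in Set.Ioi (0:ℝ), (Complex.exp (z * s) - 1) * ((Real.exp (-s) : ℝ) : ℂ) ∂ν)
        + (b : ℂ) * z := by
    unfold psiC
    rw [hGint, hg1val]
    push_cast
    ring
  -- the combined HasSum
  have hb_sum : HasSum (fun k : ℕ => if k = 0 then (b:ℂ) * z else 0) ((b:ℂ) * z) :=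
    hasSum_ite_eq 0 _
  have htotal := hswap.add hb_sum
  have hfun : (fun k : ℕ => (bernC b ν (k + 1) : ℂ) * z ^ (k + 1))
      = fun k : ℕ => (∫ s in Set.Ioi (0:ℝ), F k s ∂ν) + (if k = 0 then (b:ℂ) * z else 0) := by
    funext k
    have hFint : ∫ s in Set.Ioi (0:ℝ), F k s ∂ν
        = z ^ (k+1) * ((((k+1).factorial : ℕ) : ℂ))⁻¹ * ((A k : ℝ) : ℂ) := by
      calc ∫ s in Set.Ioi (0:ℝ), F k s ∂ν
          = ∫ s in Set.Ioi (0:ℝ),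
              (z ^ (k+1) * ((((k+1).factorial : ℕ) : ℂ))⁻¹)
                * ((s ^ (k+1) * Real.exp (-s) : ℝ) : ℂ) ∂ν := by
            apply setIntegral_congr_ae measurableSet_Ioi
            refine ae_of_all _ fun s _ => ?_
            rw [hF_def]
            push_cast
            ring
        _ = (z ^ (k+1) * ((((k+1).factorial : ℕ) : ℂ))⁻¹)
              * ∫ s in Set.Ioi (0:ℝ), ((s ^ (k+1) * Real.exp (-s) : ℝ) : ℂ) ∂ν :=
            integral_const_mul _ _
        _ = z ^ (k+1) * ((((k+1).factorial : ℕ) : ℂ))⁻¹ * ((A k : ℝ) : ℂ) := by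
            congr 1
            exact integral_ofReal
    unfold bernC
    rw [hFint]
    by_cases hk : k = 0
    · subst hk
      simp only [if_pos rfl, zero_add, if_pos rfl]
      push_cast
      ring
    · have hk1 : k + 1 ≠ 1 := by omega
      simp only [if_neg hk1, if_neg hk, add_zero]
      push_cast
      ring
  constructor
  · rw [hfun, hval]
    exact htotal
  · apply summable_norm_iff.mpr
    rw [hfun]
    exact htotal.summable
end
end

section
/- Let ψ be a Bernstein function with representation ψ(x) = a + b·x + ∫ (1 − e^{−x s}) dν(s), extended to the closed right half-plane by the same formula. Then for every u > 0 and every z ∈ ℂ with Re z ≥ 0, |ψ(u(1+z)) − ψ(u)| ≤ |z| · ψ(u). (Lemma 4.5 of the paper.) -/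
open MeasureTheory Filter Topology

lemma norm_one_sub_exp_neg (w : ℂ) (hw : 0 ≤ w.re) : ‖1 - Complex.exp (-w)‖ ≤ ‖w‖ := by
  have hderiv : ∀ t ∈ Set.uIcc (0:ℝ) 1,
      HasDerivAt (fun t : ℝ => -Complex.exp (-((t:ℂ) * w))) (w * Complex.exp (-((t:ℂ) * w))) t := by
    intro t _
    have h1 : HasDerivAt (fun t : ℝ => (t : ℂ) * w) w t := by
      simpa using (Complex.ofRealCLM.hasDerivAt (x := t)).mul_const w
    have h2 : HasDerivAt (fun t : ℝ => -Complex.exp (-((t:ℂ) * w)))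
        (-(Complex.exp (-((t:ℂ) * w)) * -w)) t := (h1.neg.cexp).neg
    convert h2 using 1
    ring
  have hcont : IntervalIntegrable (fun t : ℝ => w * Complex.exp (-((t:ℂ) * w))) volume 0 1 := by
    apply Continuous.intervalIntegrable
    fun_prop
  have key : (1 : ℂ) - Complex.exp (-w) = ∫ t in (0:ℝ)..1, w * Complex.exp (-((t:ℂ) * w)) := by
    rw [intervalIntegral.integral_eq_sub_of_hasDerivAt hderiv hcont]
    simp; ring
  rw [key]
  have := intervalIntegral.norm_integral_le_of_norm_le_const (C := ‖w‖)
    (f := fun t : ℝ => w * Complex.exp (-((t:ℂ) * w))) (a := 0) (b := 1) ?_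
  · simpa using this
  · intro t ht
    rw [Set.uIoc_of_le zero_le_one] at ht
    rw [norm_mul]
    have hre : (-((t:ℂ) * w)).re = -(t * w.re) := by simp
    rw [Complex.norm_exp, hre]
    have : Real.exp (-(t * w.re)) ≤ 1 := by
      rw [Real.exp_le_one_iff]
      exact neg_nonpos.mpr (mul_nonneg ht.1.le hw)
    nlinarith [norm_nonneg w]


lemma mul_exp_neg_le (t : ℝ) (ht : 0 ≤ t) : t * Real.exp (-t) ≤ 1 - Real.exp (-t) := by
  have h := Real.add_one_le_exp t
  have he : Real.exp (-t) * Real.exp t = 1 := by rw [← Real.exp_add]; simp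
  nlinarith [Real.exp_pos (-t)]

lemma integrableOn_one_sub_cexp (ν : Measure ℝ)
    (hνfin : IntegrableOn (fun s => min 1 s) (Set.Ioi (0:ℝ)) ν) (c : ℂ) (hc : 0 ≤ c.re) :
    IntegrableOn (fun s : ℝ => 1 - Complex.exp (-(c * s))) (Set.Ioi 0) ν := by
  have hcont : Continuous fun s : ℝ => 1 - Complex.exp (-(c * s)) := by fun_prop
  refine (hνfin.const_mul (max 2 ‖c‖)).mono' hcont.aestronglyMeasurable.restrict ?_
  filter_upwards [ae_restrict_mem measurableSet_Ioi] with s hs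
  have hs0 : (0:ℝ) < s := hs
  have hre : (c * (s:ℂ)).re = c.re * s := by simp
  have h1 : ‖1 - Complex.exp (-(c * s))‖ ≤ ‖c‖ * s := by
    have := norm_one_sub_exp_neg (c * s) (by rw [hre]; exact mul_nonneg hc hs0.le)
    simpa [norm_mul, abs_of_pos hs0] using this
  have h2 : ‖1 - Complex.exp (-(c * s))‖ ≤ 2 := by
    calc ‖1 - Complex.exp (-(c * s))‖ ≤ ‖(1:ℂ)‖ + ‖Complex.exp (-(c * s))‖ := norm_sub_le _ _
    _ ≤ 1 + 1 := by
        gcongr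
        · simp
        · rw [Complex.norm_exp]
          rw [Real.exp_le_one_iff]
          simp only [Complex.neg_re, hre]
          exact neg_nonpos.mpr (mul_nonneg hc hs0.le)
    _ = 2 := by norm_num
  rcases le_total s 1 with h | h
  · rw [min_eq_right h]
    calc ‖1 - Complex.exp (-(c * s))‖ ≤ ‖c‖ * s := h1
    _ ≤ max 2 ‖c‖ * s := by gcongr; exact le_max_right _ _
  · rw [min_eq_left h]
    calc ‖1 - Complex.exp (-(c * s))‖ ≤ 2 := h2
    _ = 2 * 1 := by ring
    _ ≤ max 2 ‖c‖ * 1 := by gcongr; exact le_max_left _ _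

lemma integrableOn_one_sub_rexp (ν : Measure ℝ)
    (hνfin : IntegrableOn (fun s => min 1 s) (Set.Ioi (0:ℝ)) ν) (u : ℝ) (hu : 0 ≤ u) :
    IntegrableOn (fun s : ℝ => 1 - Real.exp (-(u * s))) (Set.Ioi 0) ν := by
  have hcont : Continuous fun s : ℝ => 1 - Real.exp (-(u * s)) := by fun_prop
  refine (hνfin.const_mul (max 1 u)).mono' hcont.aestronglyMeasurable.restrict ?_
  filter_upwards [ae_restrict_mem measurableSet_Ioi] with s hs
  have hs0 : (0:ℝ) < s := hs
  have hle1 : 1 - Real.exp (-(u * s)) ≤ 1 := by nlinarith [Real.exp_pos (-(u*s))]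
  have hleu : 1 - Real.exp (-(u * s)) ≤ u * s := by nlinarith [Real.add_one_le_exp (-(u*s))]
  have hnn : 0 ≤ 1 - Real.exp (-(u * s)) := by
    simp only [sub_nonneg, Real.exp_le_one_iff]
    exact neg_nonpos.mpr (mul_nonneg hu hs0.le)
  rw [Real.norm_eq_abs, abs_of_nonneg hnn]
  rcases le_total s 1 with h | h
  · rw [min_eq_right h]
    calc 1 - Real.exp (-(u * s)) ≤ u * s := hleu
    _ ≤ max 1 u * s := by gcongr; exact le_max_right _ _
  · rw [min_eq_left h]
    calc 1 - Real.exp (-(u * s)) ≤ 1 := hle1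
    _ = 1 * 1 := by ring
    _ ≤ max 1 u * 1 := by gcongr; exact le_max_left _ _

noncomputable section

/-- Holomorphic extension of a Bernstein function `ψ(x) = a + b x + ∫ (1 - e^{-x s}) dν(s)`
to the closed right half-plane. -/
def psiCA (a b : ℝ) (ν : Measure ℝ) (z : ℂ) : ℂ :=
  a + b * z + ∫ s in Set.Ioi (0 : ℝ), (1 - Complex.exp (-(z * (s : ℂ)))) ∂ν

/-- Lemma 4.5: for `u > 0` and `Re z ≥ 0`, `|ψ(u(1+z)) - ψ(u)| ≤ |z| ψ(u)`. -/
theorem bernstein_perturbation_bound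
    (a b : ℝ) (ha : 0 ≤ a) (hb : 0 ≤ b) (ν : Measure ℝ)
    (hνfin : IntegrableOn (fun s => min 1 s) (Set.Ioi (0 : ℝ)) ν)
    (ψ : ℝ → ℝ)
    (hψ : ∀ x : ℝ, 0 ≤ x →
      ψ x = a + b * x + ∫ s in Set.Ioi (0 : ℝ), (1 - Real.exp (-(x * s))) ∂ν)
    (u : ℝ) (hu : 0 < u) (z : ℂ) (hz : 0 ≤ z.re) :
    ‖psiCA a b ν (u * (1 + z)) - psiCA a b ν u‖ ≤ ‖z‖ * ψ u := by
  have hc1re : 0 ≤ ((u : ℂ) * (1 + z)).re := by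
    simp only [Complex.mul_re, Complex.ofReal_re, Complex.ofReal_im, Complex.add_re,
      Complex.one_re, Complex.add_im, Complex.one_im]
    nlinarith
  have hI1 : IntegrableOn (fun s : ℝ => 1 - Complex.exp (-((u : ℂ) * (1 + z) * s))) (Set.Ioi 0) ν :=
    integrableOn_one_sub_cexp ν hνfin _ hc1re
  have hI0 : IntegrableOn (fun s : ℝ => 1 - Complex.exp (-((u:ℂ) * s))) (Set.Ioi 0) ν :=
    integrableOn_one_sub_cexp ν hνfin u (by simp [hu.le])
  have hIR : IntegrableOn (fun s : ℝ => 1 - Real.exp (-(u * s))) (Set.Ioi 0) ν :=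
    integrableOn_one_sub_rexp ν hνfin u hu.le
  set J : ℝ := ∫ s in Set.Ioi (0:ℝ), (1 - Real.exp (-(u * s))) ∂ν with hJ
  have hJnn : 0 ≤ J := by
    refine setIntegral_nonneg measurableSet_Ioi fun s hs => ?_
    simp only [sub_nonneg, Real.exp_le_one_iff]
    exact neg_nonpos.mpr (mul_nonneg hu.le (le_of_lt hs))
  have hsub : (∫ s in Set.Ioi (0:ℝ), (1 - Complex.exp (-((u:ℂ) * (1 + z) * s))) ∂ν)
      - (∫ s in Set.Ioi (0:ℝ), (1 - Complex.exp (-((u:ℂ) * s))) ∂ν)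
      = ∫ s in Set.Ioi (0:ℝ),
          (Complex.exp (-((u:ℂ) * s)) - Complex.exp (-((u:ℂ) * (1 + z) * s))) ∂ν := by
    rw [← integral_sub hI1 hI0]
    congr 1; ext s; ring
  have hdiff : psiCA a b ν (u * (1 + z)) - psiCA a b ν u
      = (b : ℂ) * u * z + ∫ s in Set.Ioi (0:ℝ),
          (Complex.exp (-((u:ℂ) * s)) - Complex.exp (-((u:ℂ) * (1 + z) * s))) ∂ν := by
    unfold psiCA
    rw [← hsub]; ring
  -- pointwise bound on the integrand
  have hpt : ∀ s ∈ Set.Ioi (0:ℝ),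
      ‖Complex.exp (-((u:ℂ) * s)) - Complex.exp (-((u:ℂ) * (1 + z) * s))‖
        ≤ ‖z‖ * (1 - Real.exp (-(u * s))) := by
    intro s hs
    have hs0 : (0:ℝ) < s := hs
    have hfac : Complex.exp (-((u:ℂ) * s)) - Complex.exp (-((u:ℂ) * (1 + z) * s))
        = Complex.exp (-((u:ℂ) * s)) * (1 - Complex.exp (-((u:ℂ) * z * s))) := by
      rw [mul_sub, mul_one, ← Complex.exp_add]
      congr 1
      ring
    rw [hfac, norm_mul]
    have hne : ‖Complex.exp (-((u:ℂ) * s))‖ = Real.exp (-(u * s)) := by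
      rw [Complex.norm_exp]
      congr 1
      simp
    rw [hne]
    have hre2 : 0 ≤ ((u:ℂ) * z * (s:ℂ)).re := by
      have : ((u:ℂ) * z * (s:ℂ)).re = u * z.re * s := by
        simp [Complex.mul_re]
      rw [this]
      positivity
    have hb1 : ‖1 - Complex.exp (-((u:ℂ) * z * s))‖ ≤ u * ‖z‖ * s := by
      have := norm_one_sub_exp_neg ((u:ℂ) * z * s) hre2
      calc ‖1 - Complex.exp (-((u:ℂ) * z * s))‖ ≤ ‖(u:ℂ) * z * (s:ℂ)‖ := this
      _ = u * ‖z‖ * s := by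
          simp [norm_mul, Complex.norm_real, Real.norm_eq_abs, abs_of_pos hu, abs_of_pos hs0]
    calc Real.exp (-(u * s)) * ‖1 - Complex.exp (-((u:ℂ) * z * s))‖
        ≤ Real.exp (-(u * s)) * (u * ‖z‖ * s) := by
          gcongr
    _ = ‖z‖ * ((u * s) * Real.exp (-(u * s))) := by ring
    _ ≤ ‖z‖ * (1 - Real.exp (-(u * s))) := by
          gcongr
          exact mul_exp_neg_le (u * s) (by positivity)
  -- bound the integral
  have hnormint : ‖∫ s in Set.Ioi (0:ℝ),
      (Complex.exp (-((u:ℂ) * s)) - Complex.exp (-((u:ℂ) * (1 + z) * s))) ∂ν‖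
      ≤ ‖z‖ * J := by
    calc ‖∫ s in Set.Ioi (0:ℝ),
        (Complex.exp (-((u:ℂ) * s)) - Complex.exp (-((u:ℂ) * (1 + z) * s))) ∂ν‖
        ≤ ∫ s in Set.Ioi (0:ℝ),
          ‖Complex.exp (-((u:ℂ) * s)) - Complex.exp (-((u:ℂ) * (1 + z) * s))‖ ∂ν :=
          norm_integral_le_integral_norm _
    _ ≤ ∫ s in Set.Ioi (0:ℝ), ‖z‖ * (1 - Real.exp (-(u * s))) ∂ν := by
        refine integral_mono_of_nonneg ?_ (hIR.const_mul ‖z‖) ?_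
        · filter_upwards with s using norm_nonneg _
        · filter_upwards [ae_restrict_mem measurableSet_Ioi] with s hs using hpt s hs
    _ = ‖z‖ * J := by rw [hJ, integral_const_mul]
  rw [hdiff]
  calc ‖(b : ℂ) * u * z + ∫ s in Set.Ioi (0:ℝ),
        (Complex.exp (-((u:ℂ) * s)) - Complex.exp (-((u:ℂ) * (1 + z) * s))) ∂ν‖
      ≤ ‖(b : ℂ) * u * z‖ + ‖∫ s in Set.Ioi (0:ℝ),
        (Complex.exp (-((u:ℂ) * s)) - Complex.exp (-((u:ℂ) * (1 + z) * s))) ∂ν‖ :=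
        norm_add_le _ _
  _ ≤ b * u * ‖z‖ + ‖z‖ * J := by
      gcongr
      simp [norm_mul, Complex.norm_real, Real.norm_eq_abs, abs_of_nonneg hb, abs_of_pos hu]
  _ ≤ ‖z‖ * ψ u := by
      rw [hψ u hu.le, ← hJ]
      have := norm_nonneg z
      nlinarith
end
end
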